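/- arXiv:1708.05902 — 6 statements merged into one kernel-verified Lean document; each statement's English description precedes it below -/
import Mathlib

section
/- Let G be a finite forest containing no isolated edges. Then χ'_t(G) ≤ Δ(G) + 2 if Δ(G) is odd, and χ'_t(G) ≤ Δ(G) + 3 otherwise. -/
set_option linter.unusedSectionVars false
set_option linter.unusedVariables false

open Finset SimpleGraph

section ZModPart

variable {k : ℕ} [NeZero k]

lemma two_isUnit (hko : Odd k) : IsUnit (2 : ZMod k) := by
  have h := (ZMod.isUnit_iff_coprime 2 k).2 (Nat.coprime_two_left.2 hko)
  simpa using h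

lemma eq_zero_of_eq_neg (hko : Odd k) {x : ZMod k} (h : x = -x) : x = 0 := by
  have h2 : (2 : ZMod k) * x = 2 * 0 := by
    rw [two_mul, mul_zero]
    nth_rewrite 2 [h]
    exact add_neg_cancel x
  exact (two_isUnit hko).mul_left_cancel h2

lemma zmod_sum_univ (hko : Odd k) : ∑ x : ZMod k, x = 0 := by
  have h : ∑ x : ZMod k, -x = ∑ x : ZMod k, x :=
    Fintype.sum_equiv (Equiv.neg (ZMod k)) _ _ (fun x => rfl)
  rw [Finset.sum_neg_distrib] at h
  exact eq_zero_of_eq_neg hko h.symm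

/-- the "positive half" of `ZMod k`. -/
def halfS (k : ℕ) : Finset (ZMod k) := (Finset.Icc 1 ((k-1)/2)).image (fun a : ℕ => (a : ZMod k))

lemma halfS_injOn (hk5 : 5 ≤ k) :
    Set.InjOn (fun a : ℕ => (a : ZMod k)) (Finset.Icc 1 ((k-1)/2)) := by
  intro a ha b hb hab
  simp only [Finset.coe_Icc, Set.mem_Icc] at ha hb
  have ha' : a < k := by omega
  have hb' : b < k := by omega
  have := congrArg ZMod.val hab
  rwa [ZMod.val_natCast_of_lt ha', ZMod.val_natCast_of_lt hb'] at this

lemma halfS_card (hk5 : 5 ≤ k) : (halfS k).card = (k-1)/2 := by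
  rw [halfS, Finset.card_image_of_injOn (halfS_injOn hk5), Nat.card_Icc]
  omega

lemma halfS_ne_zero (hk5 : 5 ≤ k) {x : ZMod k} (hx : x ∈ halfS k) : x ≠ 0 := by
  rw [halfS, Finset.mem_image] at hx
  obtain ⟨a, ha, rfl⟩ := hx
  rw [Finset.mem_Icc] at ha
  intro h
  have := congrArg ZMod.val h
  rw [ZMod.val_natCast_of_lt (by omega), ZMod.val_zero] at this
  omega

lemma halfS_neg_notMem (hk5 : 5 ≤ k) (hko : Odd k) {x : ZMod k} (hx : x ∈ halfS k) :
    -x ∉ halfS k := by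
  rw [halfS, Finset.mem_image] at hx ⊢
  obtain ⟨a, ha, rfl⟩ := hx
  rw [Finset.mem_Icc] at ha
  rintro ⟨b, hb, hba⟩
  rw [Finset.mem_Icc] at hb
  have hsum : ((b + a : ℕ) : ZMod k) = 0 := by push_cast; rw [hba]; ring
  have := congrArg ZMod.val hsum
  rw [ZMod.val_natCast_of_lt (by omega), ZMod.val_zero] at this
  omega

lemma halfS_cover (hk5 : 5 ≤ k) (hko : Odd k) {x : ZMod k} (hx : x ≠ 0) :
    x ∈ halfS k ∨ -x ∈ halfS k := by
  have hval : x.val < k := ZMod.val_lt x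
  have hval0 : x.val ≠ 0 := fun h => hx ((ZMod.val_eq_zero x).1 h)
  by_cases h : x.val ≤ (k-1)/2
  · left
    rw [halfS, Finset.mem_image]
    exact ⟨x.val, Finset.mem_Icc.2 ⟨by omega, h⟩, ZMod.natCast_rightInverse x⟩
  · right
    rw [halfS, Finset.mem_image]
    refine ⟨k - x.val, Finset.mem_Icc.2 ⟨by omega, ?_⟩, ?_⟩
    · obtain ⟨j, hj⟩ := hko; omega
    · have : ((k - x.val : ℕ) : ZMod k) = ((k : ℕ) : ZMod k) - ((x.val : ℕ) : ZMod k) := by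
        rw [Nat.cast_sub (by omega)]
      rw [this, ZMod.natCast_self, ZMod.natCast_rightInverse x, zero_sub]

lemma exists_J (hk5 : 5 ≤ k) (hko : Odd k) (B : Finset (ZMod k)) (j : ℕ)
    (hj : j + B.card ≤ (k-1)/2) :
    ∃ J : Finset (ZMod k), J ⊆ halfS k ∧ J.card = j ∧ ∀ x ∈ J, x ∉ B ∧ -x ∉ B := by
  classical
  set Brep := B.image (fun x => if x ∈ halfS k then x else -x) with hBrep
  have hcard : j ≤ ((halfS k) \ Brep).card := by
    have h1 : Brep.card ≤ B.card := Finset.card_image_le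
    have h2 : ((halfS k) \ Brep).card ≥ (halfS k).card - Brep.card := by
      have := Finset.le_card_sdiff Brep (halfS k)
      omega
    rw [halfS_card hk5] at h2
    omega
  obtain ⟨J, hJsub, hJcard⟩ := Finset.exists_subset_card_eq hcard
  refine ⟨J, fun x hx => (Finset.mem_sdiff.1 (hJsub hx)).1, hJcard, ?_⟩
  intro x hx
  have hx1 : x ∈ halfS k := (Finset.mem_sdiff.1 (hJsub hx)).1
  have hx2 : x ∉ Brep := (Finset.mem_sdiff.1 (hJsub hx)).2
  constructor
  · intro hxB
    apply hx2
    rw [hBrep, Finset.mem_image]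
    exact ⟨x, hxB, by simp [hx1]⟩
  · intro hxB
    apply hx2
    rw [hBrep, Finset.mem_image]
    refine ⟨-x, hxB, ?_⟩
    rw [if_neg (halfS_neg_notMem hk5 hko hx1), neg_neg]

/-- symmetric set -/
def symS {k : ℕ} (J : Finset (ZMod k)) : Finset (ZMod k) := J ∪ J.image (fun x => -x)

lemma symS_disj (hk5 : 5 ≤ k) (hko : Odd k) {J : Finset (ZMod k)} (hJ : J ⊆ halfS k) :
    Disjoint J (J.image (fun x => -x)) := by
  rw [Finset.disjoint_left]
  intro x hxJ hximg
  rw [Finset.mem_image] at hximg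
  obtain ⟨y, hy, rfl⟩ := hximg
  exact halfS_neg_notMem hk5 hko (hJ hy) (hJ hxJ)

lemma symS_card (hk5 : 5 ≤ k) (hko : Odd k) {J : Finset (ZMod k)} (hJ : J ⊆ halfS k) :
    (symS J).card = 2 * J.card := by
  rw [symS, Finset.card_union_of_disjoint (symS_disj hk5 hko hJ),
    Finset.card_image_of_injective _ neg_injective]
  ring

lemma symS_sum (hk5 : 5 ≤ k) (hko : Odd k) {J : Finset (ZMod k)} (hJ : J ⊆ halfS k) :
    ∑ x ∈ symS J, x = 0 := by
  rw [symS, Finset.sum_union (symS_disj hk5 hko hJ),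
    Finset.sum_image (fun x _ y _ h => neg_injective h), Finset.sum_neg_distrib]
  ring

lemma mem_symS_iff {J : Finset (ZMod k)} {x : ZMod k} :
    x ∈ symS J ↔ x ∈ J ∨ -x ∈ J := by
  rw [symS, Finset.mem_union, Finset.mem_image]
  constructor
  · rintro (h | ⟨y, hy, rfl⟩)
    · exact Or.inl h
    · right; rwa [neg_neg]
  · rintro (h | h)
    · exact Or.inl h
    · exact Or.inr ⟨-x, h, neg_neg x⟩

lemma symS_ne_zero (hk5 : 5 ≤ k) {J : Finset (ZMod k)} (hJ : J ⊆ halfS k)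
    {x : ZMod k} (hx : x ∈ symS J) : x ≠ 0 := by
  rcases mem_symS_iff.1 hx with h | h
  · exact halfS_ne_zero hk5 (hJ h)
  · intro h0; rw [h0, neg_zero] at h; exact halfS_ne_zero hk5 (hJ h) rfl

end ZModPart

section FunOfA

variable {k : ℕ} [NeZero k] {V : Type} [DecidableEq V]

lemma exists_fun_of_A (s : Finset V) (A : Finset (ZMod k)) (hcard : A.card = s.card)
    (z0 : ZMod k) (ℓ0 : V) (hz0 : z0 ∈ A) (hℓ0 : ℓ0 ∈ s) :
    ∃ a : V → ZMod k, Set.InjOn a ↑s ∧ (∀ c ∉ s, a c = 0) ∧ (∀ c ∈ s, a c ∈ A) ∧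
      (∑ x ∈ s, a x) = ∑ x ∈ A, x ∧ a ℓ0 = z0 := by
  classical
  have e : {x // x ∈ s} ≃ {x // x ∈ A} := Finset.equivOfCardEq hcard.symm
  set e' : {x // x ∈ s} ≃ {x // x ∈ A} :=
    e.trans (Equiv.swap (e ⟨ℓ0, hℓ0⟩) ⟨z0, hz0⟩) with he'
  refine ⟨fun v => if h : v ∈ s then (e' ⟨v, h⟩ : ZMod k) else 0, ?_, ?_, ?_, ?_, ?_⟩
  · intro x hx y hy hxy
    simp only [Finset.mem_coe] at hx hy
    dsimp only at hxy
    rw [dif_pos hx, dif_pos hy] at hxy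
    have := e'.injective (Subtype.ext hxy)
    exact congrArg Subtype.val this
  · intro c hc; dsimp only; rw [dif_neg hc]
  · intro c hc; dsimp only; rw [dif_pos hc]; exact (e' ⟨c, hc⟩).2
  · rw [← Finset.sum_attach s, ← Finset.sum_attach A]
    have : ∀ x : {x // x ∈ s}, (if h : (x : V) ∈ s then ((e' ⟨x, h⟩ : {x // x ∈ A}) : ZMod k) else 0)
        = ((e' x : {x // x ∈ A}) : ZMod k) := by
      intro x; rw [dif_pos x.2]
    rw [Finset.sum_congr rfl (fun x _ => this x)]
    exact Equiv.sum_comp e' (fun y : {x // x ∈ A} => (y : ZMod k))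
  · dsimp only
    rw [dif_pos hℓ0, he']
    simp only [Equiv.trans_apply]
    rw [Equiv.swap_apply_left]

lemma exists_fun_of_A' (s : Finset V) (A : Finset (ZMod k)) (hcard : A.card = s.card) :
    ∃ a : V → ZMod k, Set.InjOn a ↑s ∧ (∀ c ∉ s, a c = 0) ∧ (∀ c ∈ s, a c ∈ A) ∧
      (∑ x ∈ s, a x) = ∑ x ∈ A, x := by
  rcases Finset.eq_empty_or_nonempty s with rfl | ⟨ℓ0, hℓ0⟩
  · have hA : A = ∅ := Finset.card_eq_zero.1 (by simp [hcard])
    exact ⟨fun _ => 0, by simp [Set.InjOn], by simp, by simp, by simp [hA]⟩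
  · have hA : A.Nonempty := Finset.card_pos.1 (by rw [hcard]; exact Finset.card_pos.2 ⟨ℓ0, hℓ0⟩)
    obtain ⟨z0, hz0⟩ := hA
    obtain ⟨a, h1, h2, h3, h4, _⟩ := exists_fun_of_A s A hcard z0 ℓ0 hz0 hℓ0
    exact ⟨a, h1, h2, h3, h4⟩

end FunOfA

section Selection

variable {k : ℕ} [NeZero k] {V : Type} [DecidableEq V]

lemma card3_le (x y z : ZMod k) : ({x, y, z} : Finset (ZMod k)).card ≤ 3 := by
  have h1 := Finset.card_insert_le x ({y, z} : Finset (ZMod k))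
  have h2 := Finset.card_insert_le y ({z} : Finset (ZMod k))
  have h3 : ({z} : Finset (ZMod k)).card = 1 := Finset.card_singleton z
  omega

lemma card5_le (x y z u v : ZMod k) : ({x, y, z, u, v} : Finset (ZMod k)).card ≤ 5 := by
  have h1 := Finset.card_insert_le x ({y, z, u, v} : Finset (ZMod k))
  have h2 := Finset.card_insert_le y ({z, u, v} : Finset (ZMod k))
  have h3 := card3_le z u v
  omega

lemma exists_avoid (D : Finset (ZMod k)) (h : D.card < k) : ∃ z : ZMod k, z ∉ D := by
  have hne : (Finset.univ \ D).Nonempty := by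
    rw [← Finset.card_pos, Finset.card_sdiff_of_subset (Finset.subset_univ D), Finset.card_univ,
      ZMod.card]
    omega
  obtain ⟨z, hz⟩ := hne
  exact ⟨z, (Finset.mem_sdiff.1 hz).2⟩

lemma card_quad {a b c d : ZMod k} (h1 : a ≠ b) (h2 : a ≠ c) (h3 : a ≠ d) (h4 : b ≠ c)
    (h5 : b ≠ d) (h6 : c ≠ d) : ({a, b, c, d} : Finset (ZMod k)).card = 4 := by
  rw [Finset.card_insert_of_notMem (by simp [h1, h2, h3]),
    Finset.card_insert_of_notMem (by simp [h4, h5]),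
    Finset.card_insert_of_notMem (by simp [h6]), Finset.card_singleton]

lemma sum_quad {a b c d : ZMod k} (h1 : a ≠ b) (h2 : a ≠ c) (h3 : a ≠ d) (h4 : b ≠ c)
    (h5 : b ≠ d) (h6 : c ≠ d) : ∑ x ∈ ({a, b, c, d} : Finset (ZMod k)), x = a + b + c + d := by
  rw [Finset.sum_insert (by simp [h1, h2, h3]), Finset.sum_insert (by simp [h4, h5]),
    Finset.sum_insert (by simp [h6]), Finset.sum_singleton]
  ring

/-- Get the coloring function from a good set `A` (non-root version). -/
lemma selN_of_A (s : Finset V) (b t : ZMod k) (A : Finset (ZMod k))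
    (hcard : A.card = s.card) (h0 : 0 ∉ A) (hbA : b ∉ A)
    (hWA : b + ∑ x ∈ A, x ∉ A) (hWt : b + ∑ x ∈ A, x ≠ t) :
    ∃ a : V → ZMod k, Set.InjOn a ↑s ∧ (∀ c ∉ s, a c = 0) ∧
      (∀ c ∈ s, a c ≠ 0) ∧ (∀ c ∈ s, a c ≠ b) ∧
      (∀ c ∈ s, a c ≠ b + ∑ x ∈ s, a x) ∧ b + ∑ x ∈ s, a x ≠ t := by
  obtain ⟨a, h1, h2, h3, h4⟩ := exists_fun_of_A' s A hcard
  refine ⟨a, h1, h2, ?_, ?_, ?_, ?_⟩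
  · exact fun c hc h => h0 (h ▸ h3 c hc)
  · exact fun c hc h => hbA (h ▸ h3 c hc)
  · intro c hc h
    rw [h4] at h
    exact hWA (h ▸ h3 c hc)
  · rw [h4]; exact hWt

lemma selN (hk5 : 5 ≤ k) (hko : Odd k) (s : Finset V) (hcard : s.card + 3 ≤ k)
    (b t : ZMod k) (hb : b ≠ 0) (ht : t ≠ b) :
    ∃ a : V → ZMod k, Set.InjOn a ↑s ∧ (∀ c ∉ s, a c = 0) ∧
      (∀ c ∈ s, a c ≠ 0) ∧ (∀ c ∈ s, a c ≠ b) ∧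
      (∀ c ∈ s, a c ≠ b + ∑ x ∈ s, a x) ∧ b + ∑ x ∈ s, a x ≠ t := by
  classical
  obtain ⟨v, hv⟩ := id hko
  set m := s.card with hm
  rcases Nat.even_or_odd m with hme | hmo
  · -- even case : a symmetric set avoiding ±b
    obtain ⟨u, hu⟩ := hme
    obtain ⟨J, hJsub, hJcard, hJavoid⟩ := exists_J hk5 hko {b} u (by
      rw [Finset.card_singleton]; omega)
    have hsum : ∑ x ∈ symS J, x = 0 := symS_sum hk5 hko hJsub
    have hbA : b ∉ symS J := by
      intro hmem
      rcases mem_symS_iff.1 hmem with h | h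
      · exact (hJavoid b h).1 (Finset.mem_singleton_self b)
      · have := (hJavoid (-b) h).2
        rw [neg_neg] at this
        exact this (Finset.mem_singleton_self b)
    apply selN_of_A s b t (symS J)
    · rw [symS_card hk5 hko hJsub, hJcard]; omega
    · exact fun h => symS_ne_zero hk5 hJsub h rfl
    · exact hbA
    · rw [hsum, add_zero]; exact hbA
    · rw [hsum, add_zero]; exact ht.symm
  · -- odd case
    by_cases hm1 : m ≤ 1
    · -- m = 1
      obtain ⟨c, hc⟩ := exists_avoid ({0, b, t - b} : Finset (ZMod k))
        (lt_of_le_of_lt (card3_le _ _ _) (by omega))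
      simp only [Finset.mem_insert, Finset.mem_singleton, not_or] at hc
      obtain ⟨hc0, hcb, hct⟩ := hc
      have hm1' : m = 1 := by
        rcases hmo with ⟨w, hw⟩; omega
      apply selN_of_A s b t ({c} : Finset (ZMod k))
      · rw [Finset.card_singleton]; omega
      · simp [Ne.symm hc0]
      · simp only [Finset.mem_singleton]; exact fun h => hcb h.symm
      · rw [Finset.sum_singleton]
        simp only [Finset.mem_singleton]
        intro h
        exact hb (by linear_combination h)
      · rw [Finset.sum_singleton]
        intro h
        exact hct (by linear_combination h)
    · by_cases hsmall : m + 6 ≤ k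
      · -- odd, 3 ≤ m ≤ k - 6
        obtain ⟨c, hc⟩ := exists_avoid ({0, b, t - b} : Finset (ZMod k))
          (lt_of_le_of_lt (card3_le _ _ _) (by omega))
        simp only [Finset.mem_insert, Finset.mem_singleton, not_or] at hc
        obtain ⟨hc0, hcb, hct⟩ := hc
        obtain ⟨w, hw⟩ := hmo
        obtain ⟨J, hJsub, hJcard, hJavoid⟩ := exists_J hk5 hko {b, c, b + c} w (by
          have := card3_le b c (b + c); omega)
        have hnotmem : ∀ x ∈ ({b, c, b + c} : Finset (ZMod k)), x ∉ symS J := by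
          intro x hx hmem
          rcases mem_symS_iff.1 hmem with h | h
          · exact (hJavoid x h).1 hx
          · have := (hJavoid (-x) h).2
            rw [neg_neg] at this
            exact this hx
        have hcJ : c ∉ symS J := hnotmem c (by simp)
        have hsum : ∑ x ∈ insert c (symS J), x = c := by
          rw [Finset.sum_insert hcJ, symS_sum hk5 hko hJsub, add_zero]
        apply selN_of_A s b t (insert c (symS J))
        · rw [Finset.card_insert_of_notMem hcJ, symS_card hk5 hko hJsub, hJcard]; omega
        · simp only [Finset.mem_insert, not_or]
          exact ⟨Ne.symm hc0, fun h => symS_ne_zero hk5 hJsub h rfl⟩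
        · simp only [Finset.mem_insert, not_or]
          exact ⟨fun h => hcb h.symm, hnotmem b (by simp)⟩
        · rw [hsum]
          simp only [Finset.mem_insert, not_or]
          constructor
          · intro h; exact hb (by linear_combination h)
          · exact hnotmem (b + c) (by simp)
        · rw [hsum]
          intro h
          exact hct (by linear_combination h)
      · -- odd, m = k - 4
        have hm4 : m + 4 = k := by
          rcases hmo with ⟨w, hw⟩; omega
        have hk7 : 7 ≤ k := by omega
        by_cases ht0 : t = 0
        · -- use A = univ \ {0, b, z1, z2} with z1 + z2 = -b
          obtain ⟨v2, hv2⟩ := (two_isUnit hko).exists_right_inv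
          obtain ⟨z1, hz1⟩ := exists_avoid ({0, b, -b, -(2*b), -(b*v2)} : Finset (ZMod k))
            (lt_of_le_of_lt (card5_le _ _ _ _ _) (by omega))
          simp only [Finset.mem_insert, Finset.mem_singleton, not_or] at hz1
          obtain ⟨h10, h1b, h1nb, h1n2b, h1bv⟩ := hz1
          set z2 : ZMod k := -b - z1 with hz2
          have d1 : (0 : ZMod k) ≠ b := Ne.symm hb
          have d2 : (0 : ZMod k) ≠ z1 := Ne.symm h10
          have d3 : (0 : ZMod k) ≠ z2 := by
            rw [hz2]; intro h; exact h1nb (by linear_combination h)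
          have d4 : b ≠ z1 := Ne.symm h1b
          have d5 : b ≠ z2 := by
            rw [hz2]; intro h; exact h1n2b (by linear_combination h)
          have d6 : z1 ≠ z2 := by
            rw [hz2]; intro h
            apply h1bv
            have h2 : (2 : ZMod k) * z1 = -b := by linear_combination h
            calc z1 = (2 * v2) * z1 := by rw [hv2, one_mul]
            _ = v2 * (2 * z1) := by ring
            _ = v2 * (-b) := by rw [h2]
            _ = -(b * v2) := by ring
          have hDcard : ({0, b, z1, z2} : Finset (ZMod k)).card = 4 :=
            card_quad d1 d2 d3 d4 d5 d6
          have hsum : ∑ x ∈ (Finset.univ \ ({0, b, z1, z2} : Finset (ZMod k))), x = 0 := by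
            rw [Finset.sum_sdiff_eq_sub (Finset.subset_univ _), zmod_sum_univ hko,
              sum_quad d1 d2 d3 d4 d5 d6, hz2]
            ring
          apply selN_of_A s b t (Finset.univ \ ({0, b, z1, z2} : Finset (ZMod k)))
          · rw [Finset.card_sdiff_of_subset (Finset.subset_univ _), Finset.card_univ, ZMod.card, hDcard]
            omega
          · simp
          · simp
          · rw [hsum, add_zero]
            simp
          · rw [hsum, ht0, add_zero]
            exact hb
        · -- t ≠ 0 : use A = univ \ {0, b, z, -z}
          obtain ⟨z, hz⟩ := exists_avoid ({0, b, -b} : Finset (ZMod k))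
            (lt_of_le_of_lt (card3_le _ _ _) (by omega))
          simp only [Finset.mem_insert, Finset.mem_singleton, not_or] at hz
          obtain ⟨hz0, hzb, hznb⟩ := hz
          have d1 : (0 : ZMod k) ≠ b := Ne.symm hb
          have d2 : (0 : ZMod k) ≠ z := Ne.symm hz0
          have d3 : (0 : ZMod k) ≠ -z := fun h => hz0 (by linear_combination h)
          have d4 : b ≠ z := Ne.symm hzb
          have d5 : b ≠ -z := by intro h; exact hznb (by linear_combination h)
          have d6 : z ≠ -z := fun h => hz0 (eq_zero_of_eq_neg hko h)
          have hsum : ∑ x ∈ (Finset.univ \ ({0, b, z, -z} : Finset (ZMod k))), x = -b := by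
            rw [Finset.sum_sdiff_eq_sub (Finset.subset_univ _), zmod_sum_univ hko,
              sum_quad d1 d2 d3 d4 d5 d6]
            ring
          apply selN_of_A s b t (Finset.univ \ ({0, b, z, -z} : Finset (ZMod k)))
          · rw [Finset.card_sdiff_of_subset (Finset.subset_univ _), Finset.card_univ, ZMod.card,
              card_quad d1 d2 d3 d4 d5 d6]
            omega
          · simp
          · simp
          · rw [hsum]
            have hb0 : b + -b = (0 : ZMod k) := by ring
            rw [hb0]
            simp
          · rw [hsum]
            intro h
            exact ht0 (by linear_combination -h)

end Selection

section SelR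

variable {k : ℕ} [NeZero k] {V : Type} [DecidableEq V]

lemma cast_nat_ne_zero {a : ℕ} (h0 : a ≠ 0) (hlt : a < k) : ((a : ℕ) : ZMod k) ≠ 0 := by
  intro h
  have := congrArg ZMod.val h
  rw [ZMod.val_natCast_of_lt hlt, ZMod.val_zero] at this
  exact h0 this

lemma selR (hk5 : 5 ≤ k) (hko : Odd k) (s : Finset V) (hcard : s.card + 2 ≤ k)
    (hm1 : s.card ≠ 1) (P : V → Prop) (hP : s.card + 3 = k + 1 → ∃ ℓ ∈ s, P ℓ) :
    ∃ a : V → ZMod k, Set.InjOn a ↑s ∧ (∀ c ∉ s, a c = 0) ∧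
      (∀ c ∈ s, a c ≠ ∑ x ∈ s, a x) ∧ (∀ c ∈ s, a c = 0 → P c) := by
  classical
  obtain ⟨v, hv⟩ := id hko
  set m := s.card with hm
  rcases Nat.even_or_odd m with hme | hmo
  · -- even case : symmetric set
    obtain ⟨u, hu⟩ := hme
    obtain ⟨J, hJsub, hJcard, hJavoid⟩ := exists_J hk5 hko ∅ u (by simp; omega)
    obtain ⟨a, h1, h2, h3, h4⟩ := exists_fun_of_A' s (symS J) (by
      rw [symS_card hk5 hko hJsub, hJcard]; omega)
    refine ⟨a, h1, h2, ?_, ?_⟩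
    · intro c hc h
      rw [h4, symS_sum hk5 hko hJsub] at h
      exact symS_ne_zero hk5 hJsub (h3 c hc) h
    · intro c hc h
      exact absurd h (symS_ne_zero hk5 hJsub (h3 c hc))
  · by_cases hsmall : m + 4 ≤ k
    · -- odd, m = 0? no : odd, 3 ≤ m ≤ k - 4, base {1,2,-3}
      have hm3 : 3 ≤ m := by rcases hmo with ⟨w, hw⟩; omega
      have hk7 : 7 ≤ k := by omega
      have c1 : ((1 : ℕ) : ZMod k) ≠ 0 := cast_nat_ne_zero one_ne_zero (by omega)
      have c2 : ((2 : ℕ) : ZMod k) ≠ 0 := cast_nat_ne_zero (by omega) (by omega)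
      have c3 : ((3 : ℕ) : ZMod k) ≠ 0 := cast_nat_ne_zero (by omega) (by omega)
      have c4 : ((4 : ℕ) : ZMod k) ≠ 0 := cast_nat_ne_zero (by omega) (by omega)
      have c5 : ((5 : ℕ) : ZMod k) ≠ 0 := cast_nat_ne_zero (by omega) (by omega)
      have d12 : (1 : ZMod k) ≠ 2 := fun h => c1 (by push_cast; linear_combination -h)
      have d13 : (1 : ZMod k) ≠ -3 := fun h => c4 (by push_cast; linear_combination h)
      have d23 : (2 : ZMod k) ≠ -3 := fun h => c5 (by push_cast; linear_combination h)
      have e1 : (1 : ZMod k) ≠ 0 := fun h => c1 (by push_cast; linear_combination h)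
      have e2 : (2 : ZMod k) ≠ 0 := fun h => c2 (by push_cast; linear_combination h)
      have e3 : (-3 : ZMod k) ≠ 0 := fun h => c3 (by push_cast; linear_combination -h)
      obtain ⟨w, hw⟩ := hmo
      obtain ⟨J, hJsub, hJcard, hJavoid⟩ := exists_J hk5 hko {1, 2, 3} (w - 1) (by
        have := card3_le (1 : ZMod k) 2 3; omega)
      have hnotmem : ∀ x ∈ ({(1 : ZMod k), 2, 3} : Finset (ZMod k)), x ∉ symS J ∧ -x ∉ symS J := by
        intro x hx
        constructor
        · intro hmem
          rcases mem_symS_iff.1 hmem with h | h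
          · exact (hJavoid x h).1 hx
          · have := (hJavoid (-x) h).2
            rw [neg_neg] at this
            exact this hx
        · intro hmem
          rcases mem_symS_iff.1 hmem with h | h
          · exact (hJavoid (-x) h).2 (by rwa [neg_neg])
          · rw [neg_neg] at h
            exact (hJavoid x h).1 hx
      have hb1 : (1 : ZMod k) ∉ symS J := (hnotmem 1 (by simp)).1
      have hb2 : (2 : ZMod k) ∉ symS J := (hnotmem 2 (by simp)).1
      have hb3 : (-3 : ZMod k) ∉ symS J := (hnotmem 3 (by simp)).2
      have hdisj : Disjoint ({(1 : ZMod k), 2, -3} : Finset (ZMod k)) (symS J) := by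
        rw [Finset.disjoint_left]
        intro x hx
        simp only [Finset.mem_insert, Finset.mem_singleton] at hx
        rcases hx with rfl | rfl | rfl
        · exact hb1
        · exact hb2
        · exact hb3
      have hbasecard : ({(1 : ZMod k), 2, -3} : Finset (ZMod k)).card = 3 := by
        rw [Finset.card_insert_of_notMem (by simp [d12, d13]),
          Finset.card_insert_of_notMem (by simp [d23]), Finset.card_singleton]
      have hbasesum : ∑ x ∈ ({(1 : ZMod k), 2, -3} : Finset (ZMod k)), x = 0 := by
        rw [Finset.sum_insert (by simp [d12, d13]), Finset.sum_insert (by simp [d23]),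
          Finset.sum_singleton]
        ring
      set A := ({(1 : ZMod k), 2, -3} : Finset (ZMod k)) ∪ symS J with hA
      have hAcard : A.card = m := by
        rw [hA, Finset.card_union_of_disjoint hdisj, hbasecard,
          symS_card hk5 hko hJsub, hJcard]
        omega
      have hAsum : ∑ x ∈ A, x = 0 := by
        rw [hA, Finset.sum_union hdisj, hbasesum, symS_sum hk5 hko hJsub, add_zero]
      have hA0 : (0 : ZMod k) ∉ A := by
        rw [hA, Finset.mem_union]
        rintro (h | h)
        · simp only [Finset.mem_insert, Finset.mem_singleton] at h
          rcases h with h | h | h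
          · exact e1 h.symm
          · exact e2 h.symm
          · exact e3 h.symm
        · exact symS_ne_zero hk5 hJsub h rfl
      obtain ⟨a, h1, h2, h3, h4⟩ := exists_fun_of_A' s A hAcard
      refine ⟨a, h1, h2, ?_, ?_⟩
      · intro c hc h
        rw [h4, hAsum] at h
        exact hA0 (h ▸ h3 c hc)
      · intro c hc h
        exact absurd (h ▸ h3 c hc) hA0
    · -- m = k - 2, use A = univ \ {1, -2}, put 0 on the designated leaf
      have hm2 : m + 2 = k := by rcases hmo with ⟨w, hw⟩; omega
      obtain ⟨ℓ0, hℓ0, hPℓ0⟩ := hP (by omega)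
      have c2 : ((2 : ℕ) : ZMod k) ≠ 0 := cast_nat_ne_zero (by omega) (by omega)
      have c3 : ((3 : ℕ) : ZMod k) ≠ 0 := cast_nat_ne_zero (by omega) (by omega)
      have d12 : (1 : ZMod k) ≠ -2 := fun h => c3 (by push_cast; linear_combination h)
      have hz0 : (0 : ZMod k) ∈ Finset.univ \ ({1, -2} : Finset (ZMod k)) := by
        simp only [Finset.mem_sdiff, Finset.mem_univ, true_and, Finset.mem_insert,
          Finset.mem_singleton, not_or]
        have c1 : ((1 : ℕ) : ZMod k) ≠ 0 := cast_nat_ne_zero one_ne_zero (by omega)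
        constructor
        · exact fun h => c1 (by push_cast; linear_combination -h)
        · exact fun h => c2 (by push_cast; linear_combination h)
      have hAcard : (Finset.univ \ ({1, -2} : Finset (ZMod k))).card = m := by
        rw [Finset.card_sdiff_of_subset (Finset.subset_univ _), Finset.card_univ, ZMod.card,
          Finset.card_pair d12]
        omega
      have hAsum : ∑ x ∈ Finset.univ \ ({1, -2} : Finset (ZMod k)), x = 1 := by
        rw [Finset.sum_sdiff_eq_sub (Finset.subset_univ _), zmod_sum_univ hko,
          Finset.sum_pair d12]
        ring
      have h1A : (1 : ZMod k) ∉ Finset.univ \ ({1, -2} : Finset (ZMod k)) := by simp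
      obtain ⟨a, h1, h2, h3, h4, h5⟩ :=
        exists_fun_of_A s (Finset.univ \ ({1, -2} : Finset (ZMod k))) hAcard 0 ℓ0 hz0 hℓ0
      refine ⟨a, h1, h2, ?_, ?_⟩
      · intro c hc h
        rw [h4, hAsum] at h
        exact h1A (h ▸ h3 c hc)
      · intro c hc h
        have : c = ℓ0 := h1 (Finset.mem_coe.2 hc) (Finset.mem_coe.2 hℓ0) (by rw [h, h5])
        rwa [this]

end SelR

section GraphPart

open SimpleGraph

variable {V : Type} [Fintype V] [DecidableEq V]

/-- delete all edges at `r` -/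
def prune (G : SimpleGraph V) (r : V) : SimpleGraph V := G.deleteEdges (G.incidenceSet r)

lemma prune_adj {G : SimpleGraph V} {r u v : V} :
    (prune G r).Adj u v ↔ G.Adj u v ∧ u ≠ r ∧ v ≠ r := by
  rw [prune, SimpleGraph.deleteEdges_adj]
  constructor
  · rintro ⟨h, hn⟩
    refine ⟨h, ?_, ?_⟩
    · rintro rfl
      exact hn ((G.mem_incidenceSet u v).2 h)
    · rintro rfl
      exact hn (by rw [Sym2.eq_swap]; exact (G.mem_incidenceSet v u).2 h.symm)
  · rintro ⟨h, hu, hv⟩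
    refine ⟨h, ?_⟩
    rintro ⟨_, hmem⟩
    rw [Sym2.mem_iff] at hmem
    rcases hmem with h' | h'
    · exact hu h'.symm
    · exact hv h'.symm

lemma prune_le {G : SimpleGraph V} {r : V} : prune G r ≤ G := SimpleGraph.deleteEdges_le _

def pruneInst (G : SimpleGraph V) (inst : DecidableRel G.Adj) (r : V) :
    DecidableRel (prune G r).Adj := fun _ _ => decidable_of_iff _ prune_adj.symm

lemma prune_acyclic {G : SimpleGraph V} {r : V} (h : G.IsAcyclic) : (prune G r).IsAcyclic := by
  intro v c hc
  exact h (c.transfer G (fun e he => SimpleGraph.edgeSet_mono prune_le (c.edges_subset_edgeSet he)))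
    (hc.transfer _)

lemma prune_reach_r {G : SimpleGraph V} {r x : V} (h : (prune G r).Reachable r x) : x = r := by
  obtain ⟨w⟩ := h
  cases w with
  | nil => rfl
  | cons h p => exact absurd rfl (prune_adj.1 h).2.1

lemma reach_of_deg_zero {G : SimpleGraph V} [DecidableRel G.Adj] {r x : V}
    (hd : G.degree r = 0) (h : G.Reachable r x) : x = r := by
  obtain ⟨w⟩ := h
  cases w with
  | nil => rfl
  | cons h p =>
    exfalso
    have : _ ∈ G.neighborFinset r := (SimpleGraph.mem_neighborFinset _ _ _).2 h
    have := Finset.card_pos.2 ⟨_, this⟩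
    rw [← SimpleGraph.degree] at this
    omega

lemma walk_support_reach {G : SimpleGraph V} {u v x : V} (w : G.Walk u v)
    (hx : x ∈ w.support) : G.Reachable u x := ⟨w.takeUntil x hx⟩

/-- distinct children of `r` lie in different components of the pruned graph -/
lemma prune_comp_disjoint {G : SimpleGraph V} {r : V} (hac : G.IsAcyclic) {c c' x : V}
    (hc : G.Adj r c) (hc' : G.Adj r c') (hne : c ≠ c')
    (h1 : (prune G r).Reachable c x) (h2 : (prune G r).Reachable c' x) : False := by
  obtain ⟨w⟩ := h1.trans h2.symm
  set p := w.toPath with hp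
  have hrsupp : r ∉ (p : (prune G r).Walk c c').support := by
    intro hr
    have := walk_support_reach _ hr
    exact hc.ne' (prune_reach_r this.symm)
  have hedges : ∀ e ∈ (p : (prune G r).Walk c c').edges, e ∈ G.edgeSet :=
    fun e he => SimpleGraph.edgeSet_mono prune_le
      ((p : (prune G r).Walk c c').edges_subset_edgeSet he)
  set q := (p : (prune G r).Walk c c').transfer G hedges with hq
  have hqpath : q.IsPath := p.2.transfer _
  have hqsupp : q.support = (p : (prune G r).Walk c c').support := by
    rw [hq, SimpleGraph.Walk.support_transfer]
  have hP2 : (SimpleGraph.Walk.cons hc q).IsPath := by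
    rw [SimpleGraph.Walk.cons_isPath_iff, hqsupp]
    exact ⟨hqpath, hrsupp⟩
  have hP1 : (SimpleGraph.Walk.cons hc' (SimpleGraph.Walk.nil)).IsPath :=
    (SimpleGraph.Path.singleton hc').2
  have := SimpleGraph.isAcyclic_iff_path_unique.1 hac ⟨_, hP1⟩ ⟨_, hP2⟩
  have hsupp := congrArg (fun (P : G.Path r c') => (P : G.Walk r c').support) this
  simp only [SimpleGraph.Walk.support_cons, SimpleGraph.Walk.support_nil] at hsupp
  rw [(q.support_eq_cons)] at hsupp
  simp only [List.cons.injEq] at hsupp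
  exact hne (hsupp.2.1.symm)

/-- decompose reachability from `r` through a child -/
lemma exists_child {G : SimpleGraph V} {r u : V} (h : G.Reachable r u) (hne : u ≠ r) :
    ∃ c, G.Adj r c ∧ (prune G r).Reachable c u := by
  obtain ⟨w⟩ := h
  obtain ⟨w', hw'⟩ := w.toPath
  cases w' with
  | nil => exact absurd rfl hne
  | @cons _ c _ hadj q =>
    rw [SimpleGraph.Walk.cons_isPath_iff] at hw'
    refine ⟨c, hadj, ⟨q.toDeleteEdges _ ?_⟩⟩
    intro e he
    rintro ⟨_, hmem⟩
    induction e with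
    | h x y =>
      rw [Sym2.mem_iff] at hmem
      rcases hmem with rfl | rfl
      · exact hw'.2 (q.fst_mem_support_of_mem_edges he)
      · exact hw'.2 (q.snd_mem_support_of_mem_edges he)

lemma prune_reach_to_G {G : SimpleGraph V} {r c u : V} (hc : G.Adj r c)
    (h : (prune G r).Reachable c u) : G.Reachable r u :=
  (SimpleGraph.Adj.reachable hc).trans (h.mono prune_le)

end GraphPart

section GraphPart2

open SimpleGraph

variable {V : Type} [Fintype V] [DecidableEq V]

lemma prune_neighborFinset {G : SimpleGraph V} [DecidableRel G.Adj] {r v : V}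
    [DecidableRel (prune G r).Adj] (hv : v ≠ r) :
    (prune G r).neighborFinset v = G.neighborFinset v \ {r} := by
  ext x
  rw [SimpleGraph.mem_neighborFinset, Finset.mem_sdiff, SimpleGraph.mem_neighborFinset,
    Finset.mem_singleton, prune_adj]
  constructor
  · rintro ⟨h, _, hx⟩; exact ⟨h, hx⟩
  · rintro ⟨h, hx⟩; exact ⟨h, hv, hx⟩

lemma prune_neighborFinset_r {G : SimpleGraph V} [DecidableRel G.Adj] {r : V}
    [DecidableRel (prune G r).Adj] :
    (prune G r).neighborFinset r = ∅ := by
  ext x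
  rw [SimpleGraph.mem_neighborFinset, prune_adj]
  simp

lemma prune_degree_r {G : SimpleGraph V} [DecidableRel G.Adj] {r : V}
    [DecidableRel (prune G r).Adj] : (prune G r).degree r = 0 := by
  rw [SimpleGraph.degree, prune_neighborFinset_r, Finset.card_empty]

lemma wt_split {M : Type} [AddCommGroup M] {G : SimpleGraph V} [DecidableRel G.Adj] {r v : V}
    [DecidableRel (prune G r).Adj] (hv : v ≠ r) (f : V → M) :
    ∑ x ∈ G.neighborFinset v, f x
      = (if G.Adj r v then f r else 0) + ∑ x ∈ (prune G r).neighborFinset v, f x := by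
  rw [prune_neighborFinset hv]
  by_cases h : G.Adj r v
  · rw [if_pos h]
    have hr : r ∈ G.neighborFinset v := (SimpleGraph.mem_neighborFinset _ _ _).2 h.symm
    rw [Finset.sum_eq_sum_sdiff_singleton_add hr]
    exact add_comm _ _
  · rw [if_neg h, zero_add]
    congr 1
    symm
    apply Finset.sdiff_eq_self_of_disjoint
    rw [Finset.disjoint_singleton_right, SimpleGraph.mem_neighborFinset]
    exact fun hadj => h hadj.symm

lemma prune_degree_le {G : SimpleGraph V} [DecidableRel G.Adj] {r v : V}
    [DecidableRel (prune G r).Adj] : (prune G r).degree v ≤ G.degree v := by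
  apply Finset.card_le_card
  intro x hx
  rw [SimpleGraph.mem_neighborFinset] at hx ⊢
  exact prune_le hx

lemma prune_degree_child {G : SimpleGraph V} [DecidableRel G.Adj] {r c : V}
    [DecidableRel (prune G r).Adj] (hc : G.Adj r c) :
    (prune G r).degree c + 1 = G.degree c := by
  have hr : r ∈ G.neighborFinset c := (SimpleGraph.mem_neighborFinset _ _ _).2 hc.symm
  rw [SimpleGraph.degree, SimpleGraph.degree, prune_neighborFinset hc.ne',
    Finset.card_sdiff_of_subset (Finset.singleton_subset_iff.2 hr), Finset.card_singleton]
  have := Finset.card_pos.2 ⟨r, hr⟩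
  omega

lemma edgeFinset_card_lt {G G' : SimpleGraph V} [DecidableRel G.Adj] [DecidableRel G'.Adj]
    (hle : G' ≤ G) {u v : V} (h : G.Adj u v) (h' : ¬G'.Adj u v) :
    G'.edgeFinset.card < G.edgeFinset.card := by
  apply Finset.card_lt_card
  constructor
  · exact SimpleGraph.edgeFinset_mono hle
  · intro hsub
    have : s(u, v) ∈ G.edgeFinset := SimpleGraph.mem_edgeFinset.2 (G.mem_edgeSet.2 h)
    have := hsub this
    rw [SimpleGraph.mem_edgeFinset, SimpleGraph.mem_edgeSet] at this
    exact h' this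

/-- delete all edges of the component of `r` -/
def pruneComp (G : SimpleGraph V) (r : V) : SimpleGraph V :=
  G.deleteEdges {e | ∃ x ∈ e, G.Reachable r x}

lemma pruneComp_adj {G : SimpleGraph V} {r u v : V} :
    (pruneComp G r).Adj u v ↔ G.Adj u v ∧ ¬G.Reachable r u ∧ ¬G.Reachable r v := by
  rw [pruneComp, SimpleGraph.deleteEdges_adj]
  constructor
  · rintro ⟨h, hn⟩
    refine ⟨h, ?_, ?_⟩
    · exact fun hr => hn ⟨u, by rw [Sym2.mem_iff]; left; rfl, hr⟩
    · exact fun hr => hn ⟨v, by rw [Sym2.mem_iff]; right; rfl, hr⟩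
  · rintro ⟨h, hu, hv⟩
    refine ⟨h, ?_⟩
    rintro ⟨x, hmem, hr⟩
    rw [Sym2.mem_iff] at hmem
    rcases hmem with rfl | rfl
    · exact hu hr
    · exact hv hr

lemma pruneComp_le {G : SimpleGraph V} {r : V} : pruneComp G r ≤ G :=
  SimpleGraph.deleteEdges_le _

lemma pruneComp_acyclic {G : SimpleGraph V} {r : V} (h : G.IsAcyclic) :
    (pruneComp G r).IsAcyclic := by
  intro v c hc
  exact h (c.transfer G (fun e he =>
    SimpleGraph.edgeSet_mono pruneComp_le (c.edges_subset_edgeSet he))) (hc.transfer _)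

lemma pruneComp_neighborFinset {G : SimpleGraph V} [DecidableRel G.Adj] {r v : V}
    [DecidableRel (pruneComp G r).Adj] (hv : ¬G.Reachable r v) :
    (pruneComp G r).neighborFinset v = G.neighborFinset v := by
  ext x
  rw [SimpleGraph.mem_neighborFinset, SimpleGraph.mem_neighborFinset, pruneComp_adj]
  constructor
  · rintro ⟨h, _, _⟩; exact h
  · intro h
    refine ⟨h, hv, fun hr => hv (hr.trans h.symm.reachable)⟩

lemma pruneComp_degree_le {G : SimpleGraph V} [DecidableRel G.Adj] {r v : V}
    [DecidableRel (pruneComp G r).Adj] : (pruneComp G r).degree v ≤ G.degree v := by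
  apply Finset.card_le_card
  intro x hx
  rw [SimpleGraph.mem_neighborFinset] at hx ⊢
  exact pruneComp_le hx

end GraphPart2

section LeafPart

open SimpleGraph

variable {V : Type} [Fintype V] [DecidableEq V]

lemma exists_leaf {G : SimpleGraph V} [DecidableRel G.Adj] (hac : G.IsAcyclic)
    {u0 v0 : V} (h00 : G.Adj u0 v0) : ∃ x, G.degree x = 1 := by
  classical
  obtain ⟨⟨u, v, P⟩, -, hmax⟩ := Finset.exists_max_image
    (Finset.univ : Finset ((u : V) × (v : V) × G.Path u v))
    (fun z => (z.2.2 : G.Walk z.1 z.2.1).length)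
    ⟨⟨u0, v0, SimpleGraph.Path.singleton h00⟩, Finset.mem_univ _⟩
  have hmax' : ∀ (a b : V) (Q : G.Path a b),
      (Q : G.Walk a b).length ≤ (P : G.Walk u v).length := by
    intro a b Q
    exact hmax ⟨a, b, Q⟩ (Finset.mem_univ _)
  have hlen1 : 1 ≤ (P : G.Walk u v).length :=
    hmax' u0 v0 (SimpleGraph.Path.singleton h00)
  set Q := P.reverse with hQ
  have hQlen : 1 ≤ (Q : G.Walk v u).length := by
    rw [hQ]
    simpa [SimpleGraph.Path.reverse] using hlen1
  cases hw : (Q : G.Walk v u) with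
  | nil => rw [hw] at hQlen; simp at hQlen
  | @cons _ y _ hadj q =>
    have hQpath : (Q : G.Walk v u).IsPath := Q.2
    rw [hw, SimpleGraph.Walk.cons_isPath_iff] at hQpath
    obtain ⟨hqpath, hvq⟩ := hQpath
    refine ⟨v, ?_⟩
    have hy : y ∈ G.neighborFinset v := (SimpleGraph.mem_neighborFinset _ _ _).2 hadj
    have hsub : G.neighborFinset v ⊆ {y} := by
      intro x hx
      rw [SimpleGraph.mem_neighborFinset] at hx
      rw [Finset.mem_singleton]
      by_contra hxy
      by_cases hxs : x ∈ q.support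
      · -- build a cycle
        have hq' : (q.takeUntil x hxs).IsPath := hqpath.takeUntil hxs
        have hvq' : v ∉ (q.takeUntil x hxs).support :=
          fun hmem => hvq (SimpleGraph.Walk.support_takeUntil_subset _ hxs hmem)
        have hppath : (SimpleGraph.Walk.cons hadj (q.takeUntil x hxs)).IsPath := by
          rw [SimpleGraph.Walk.cons_isPath_iff]
          exact ⟨hq', hvq'⟩
        have hecyc : (SimpleGraph.Walk.cons hx.symm
            (SimpleGraph.Walk.cons hadj (q.takeUntil x hxs))).IsCycle := by
          rw [SimpleGraph.Walk.cons_isCycle_iff]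
          refine ⟨hppath, ?_⟩
          rw [SimpleGraph.Walk.edges_cons]
          intro hmem
          rcases List.mem_cons.1 hmem with heq | hmem'
          · rw [Sym2.eq_iff] at heq
            rcases heq with ⟨h1, h2⟩ | ⟨h1, h2⟩
            · exact hadj.ne h2
            · exact hxy h1
          · exact hvq' (SimpleGraph.Walk.fst_mem_support_of_mem_edges _ (by
              rw [Sym2.eq_swap] at hmem'
              exact hmem'))
        exact hac _ hecyc
      · -- extend the path
        have hnew : (SimpleGraph.Walk.cons hx.symm (SimpleGraph.Walk.cons hadj q)).IsPath := by
          rw [SimpleGraph.Walk.cons_isPath_iff, ← hw]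
          refine ⟨Q.2, ?_⟩
          rw [hw, SimpleGraph.Walk.support_cons]
          intro hmem
          rcases List.mem_cons.1 hmem with heq | hmem'
          · exact hx.ne heq.symm
          · exact hxs hmem'
        have := hmax' x u ⟨_, hnew⟩
        have hlen : (SimpleGraph.Walk.cons hx.symm (SimpleGraph.Walk.cons hadj q)).length
            = (Q : G.Walk v u).length + 1 := by
          rw [hw]
          simp [SimpleGraph.Walk.length_cons]
        rw [hlen] at this
        have hQP : (Q : G.Walk v u).length = (P : G.Walk u v).length := by
          rw [hQ]
          simp [SimpleGraph.Path.reverse]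
        omega
    rw [SimpleGraph.degree]
    have : G.neighborFinset v = {y} :=
      Finset.Subset.antisymm hsub (Finset.singleton_subset_iff.2 hy)
    rw [this, Finset.card_singleton]

end LeafPart

section MainPart

open SimpleGraph

variable {V : Type} [Fintype V] [DecidableEq V]

/-- weight of a vertex -/
def Wt {k : ℕ} (G : SimpleGraph V) [DecidableRel G.Adj] (f : Sym2 V → ZMod k) (v : V) : ZMod k :=
  ∑ x ∈ G.neighborFinset v, f s(x, v)

lemma Wt_zero {k : ℕ} (G : SimpleGraph V) [DecidableRel G.Adj] (v : V) :
    Wt G (fun _ => (0 : ZMod k)) v = 0 := by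
  rw [Wt]; exact Finset.sum_const_zero

/-- the bundle of properties provided by the recursion -/
def Bundle {k : ℕ} (G : SimpleGraph V) [DecidableRel G.Adj] (r : V) (b t : ZMod k)
    (f : Sym2 V → ZMod k) : Prop :=
  (∀ u v w, G.Reachable r u → G.Adj u v → G.Adj u w → v ≠ w → f s(u, v) ≠ f s(u, w)) ∧
  (∀ c, G.Adj r c → f s(r, c) ≠ b) ∧
  (b + Wt G f r ≠ t) ∧
  (∀ u v, G.Reachable r u → G.Adj u v → u ≠ r → v ≠ r → Wt G f u ≠ Wt G f v) ∧
  (∀ c, G.Adj r c → Wt G f c ≠ b + Wt G f r) ∧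
  (∀ u v, ¬G.Reachable r u ∨ ¬G.Reachable r v → f s(u, v) = 0) ∧
  (∀ u v, ¬G.Adj u v → f s(u, v) = 0)

lemma trivBundle {k : ℕ} (G : SimpleGraph V) [DecidableRel G.Adj] (r : V)
    (hdeg : G.degree r = 0) (b t : ZMod k) (htb : t ≠ b) :
    Bundle G r b t (fun _ => 0) := by
  have hadj0 : ∀ v, ¬G.Adj r v := by
    intro v h
    have h1 : v ∈ G.neighborFinset r := (SimpleGraph.mem_neighborFinset _ _ _).2 h
    have h2 := Finset.card_pos.2 ⟨v, h1⟩
    rw [← SimpleGraph.degree] at h2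
    omega
  have hreach : ∀ u, G.Reachable r u → u = r := fun u h => reach_of_deg_zero hdeg h
  refine ⟨?_, ?_, ?_, ?_, ?_, ?_, ?_⟩
  · intro u v w hru huv _ _
    exact absurd (hreach u hru ▸ huv) (hadj0 v)
  · intro c hc
    exact absurd hc (hadj0 c)
  · rw [Wt_zero, add_zero]
    exact fun h => htb h.symm
  · intro u v hru _ hur _
    exact absurd (hreach u hru) hur
  · intro c hc
    exact absurd hc (hadj0 c)
  · intro u v _; rfl
  · intro u v _; rfl

end MainPart

section MainInduction

open SimpleGraph

variable {V : Type} [Fintype V] [DecidableEq V]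

theorem mainS (k : ℕ) [NeZero k] (hk5 : 5 ≤ k) (hko : Odd k) :
    ∀ (n : ℕ) (G : SimpleGraph V) [instG : DecidableRel G.Adj], G.edgeFinset.card ≤ n →
    G.IsAcyclic →
    ∀ (r : V), (∀ v, G.Reachable r v → G.degree v + 2 ≤ k) →
    ∀ (root? : Bool) (b t : ZMod k),
    (root? = false → b ≠ 0 ∧ t ≠ b ∧ G.degree r + 3 ≤ k) →
    (root? = true → b = 0 ∧ G.degree r ≠ 1 ∧
      (G.degree r = 0 ∨ ∃ ℓ, G.Adj r ℓ ∧ G.degree ℓ = 1)) →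
    ∃ f : Sym2 V → ZMod k,
      (∀ u v w, G.Reachable r u → G.Adj u v → G.Adj u w → v ≠ w → f s(u, v) ≠ f s(u, w)) ∧
      (root? = false → ∀ c, G.Adj r c → f s(r, c) ≠ b) ∧
      (root? = false → b + Wt G f r ≠ t) ∧
      (∀ u v, G.Reachable r u → G.Adj u v → u ≠ r → v ≠ r → Wt G f u ≠ Wt G f v) ∧
      (∀ c, G.Adj r c → Wt G f c ≠ b + Wt G f r) ∧
      (∀ u v, ¬G.Reachable r u ∨ ¬G.Reachable r v → f s(u, v) = 0) ∧
      (∀ u v, ¬G.Adj u v → f s(u, v) = 0) := by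
  have hone : (1 : ZMod k) ≠ 0 := by
    have := cast_nat_ne_zero (k := k) one_ne_zero (by omega)
    simpa using this
  intro n
  induction n with
  | zero =>
    intro G instG hcard hac r hdegb root? b t hfalse htrue
    -- no edges at all, so degree r = 0
    have hdr : G.degree r = 0 := by
      by_contra h
      have h1 : 0 < G.degree r := Nat.pos_of_ne_zero h
      rw [SimpleGraph.degree] at h1
      obtain ⟨v, hv⟩ := Finset.card_pos.1 h1
      rw [SimpleGraph.mem_neighborFinset] at hv
      have : s(r, v) ∈ G.edgeFinset := SimpleGraph.mem_edgeFinset.2 (G.mem_edgeSet.2 hv)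
      have := Finset.card_pos.2 ⟨_, this⟩
      omega
    obtain ⟨B1, B2, _, B4, B5, B6, B7⟩ :=
      trivBundle G r hdr b (b + 1) (fun h => hone (by linear_combination h))
    refine ⟨fun _ => 0, B1, fun _ => B2, ?_, B4, B5, B6, B7⟩
    intro hf
    rw [Wt_zero, add_zero]
    exact fun h => (hfalse hf).2.1 h.symm
  | succ n IH =>
    intro G instG hcard hac r hdegb root? b t hfalse htrue
    by_cases hdr : G.degree r = 0
    · obtain ⟨B1, B2, _, B4, B5, B6, B7⟩ :=
        trivBundle G r hdr b (b + 1) (fun h => hone (by linear_combination h))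
      refine ⟨fun _ => 0, B1, fun _ => B2, ?_, B4, B5, B6, B7⟩
      intro hf
      rw [Wt_zero, add_zero]
      exact fun h => (hfalse hf).2.1 h.symm
    · -- main case
      set N := G.neighborFinset r with hN
      letI instP : DecidableRel (prune G r).Adj := pruneInst G instG r
      -- selection of the labels of the edges at r
      have hsel : ∃ a : V → ZMod k, Set.InjOn a ↑N ∧ (∀ c ∉ N, a c = 0) ∧
          (∀ c ∈ N, a c ≠ b + ∑ x ∈ N, a x) ∧
          (∀ c ∈ N, a c = 0 → G.degree c = 1) ∧
          (root? = false → (∀ c ∈ N, a c ≠ b) ∧ b + ∑ x ∈ N, a x ≠ t) := by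
        cases root? with
        | false =>
          obtain ⟨hb0, htb, hdeg3⟩ := hfalse rfl
          obtain ⟨a, s1, s2, s3, s4, s5, s6⟩ :=
            selN hk5 hko N (by rw [hN]; rw [← SimpleGraph.degree] at *; omega) b t hb0 htb
          exact ⟨a, s1, s2, s5, fun c hc h0 => absurd h0 (s3 c hc), fun _ => ⟨s4, s6⟩⟩
        | true =>
          obtain ⟨hb0, hd1, hleaf⟩ := htrue rfl
          subst hb0
          rcases hleaf with h0 | ⟨ℓ, hℓadj, hℓdeg⟩
          · exact absurd h0 hdr
          · obtain ⟨a, s1, s2, s3, s4⟩ := selR hk5 hko N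
              (by have := hdegb r (SimpleGraph.Reachable.refl r); rw [hN, ← SimpleGraph.degree] at *; omega)
              (by rw [hN, ← SimpleGraph.degree]; exact hd1)
              (fun c => G.degree c = 1)
              (fun _ => ⟨ℓ, (SimpleGraph.mem_neighborFinset _ _ _).2 hℓadj, hℓdeg⟩)
            refine ⟨a, s1, s2, ?_, s4, by simp⟩
            intro c hc
            rw [zero_add]
            exact s3 c hc
      obtain ⟨a, hInj, hOff, hNeW, hZeroLeaf, hRootF⟩ := hsel
      set W := b + ∑ x ∈ N, a x with hW
      -- recursive colorings of the subtrees
      have hchild : ∀ c ∈ N, ∃ fc : Sym2 V → ZMod k, Bundle (prune G r) c (a c) W fc := by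
        intro c hc
        have hadjc : G.Adj r c := (SimpleGraph.mem_neighborFinset _ _ _).1 hc
        by_cases hlf : G.degree c = 1
        · -- leaf child: take the zero coloring
          have hdc : (prune G r).degree c = 0 := by
            have := prune_degree_child (r := r) hadjc
            omega
          exact ⟨fun _ => 0, trivBundle (prune G r) c hdc (a c) W
            (fun h => hNeW c hc h.symm)⟩
        · -- real recursion
          have hac0 : a c ≠ 0 := fun h0 => hlf (hZeroLeaf c hc h0)
          have hcardP : (prune G r).edgeFinset.card ≤ n := by
            have := edgeFinset_card_lt (G := G) (G' := prune G r) prune_le hadjc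
              (fun h => (prune_adj.1 h).2.1 rfl)
            omega
          have hdegbP : ∀ v, (prune G r).Reachable c v → (prune G r).degree v + 2 ≤ k := by
            intro v hv
            have := hdegb v (prune_reach_to_G hadjc hv)
            have := prune_degree_le (G := G) (r := r) (v := v)
            omega
          obtain ⟨f, c1, c2, c3, c4, c5, c6, c7⟩ :=
            IH (prune G r) hcardP (prune_acyclic hac) c hdegbP false (a c) W
              (fun _ => ⟨hac0, (hNeW c hc).symm, by
                have h1 := prune_degree_child (r := r) hadjc
                have h2 := hdegb c hadjc.reachable
                omega⟩)
              (by simp)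
          exact ⟨f, c1, c2 rfl, c3 rfl, c4, c5, c6, c7⟩
      choose fc hfc using hchild
      -- the edge labels at r
      have hcomm : ∀ x y : V, (if x = r then a y else if y = r then a x else 0)
          = (if y = r then a x else if x = r then a y else 0) := by
        intro x y
        by_cases hx : x = r <;> by_cases hy : y = r <;> simp [hx, hy]
      set h0 : Sym2 V → ZMod k := Sym2.lift ⟨fun x y => if x = r then a y
        else if y = r then a x else 0, hcomm⟩ with hh0def
      have hh0 : ∀ x y : V, h0 s(x, y) = if x = r then a y else if y = r then a x else 0 := by
        intro x y
        rw [hh0def, Sym2.lift_mk]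
      set F : Sym2 V → ZMod k := fun e => h0 e + ∑ c ∈ N.attach, fc c.1 c.2 e with hFdef
      -- reachability helpers
      have hnr : ∀ (c : V), c ∈ N → ∀ u, (prune G r).Reachable c u → u ≠ r := by
        intro c hc u hu hur
        subst hur
        exact ((SimpleGraph.mem_neighborFinset _ _ _).1 hc).ne (prune_reach_r hu.symm).symm
      -- evaluation of F at edges incident to r
      have hFr : ∀ x, F s(r, x) = a x := by
        intro x
        rw [hFdef]
        dsimp only
        rw [hh0, if_pos rfl]
        have : ∀ c ∈ N.attach, fc c.1 c.2 s(r, x) = 0 := by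
          intro c _
          exact (hfc c.1 c.2).2.2.2.2.2.1 r x (Or.inl (fun h => hnr c.1 c.2 r h rfl))
        rw [Finset.sum_congr rfl this, Finset.sum_const_zero, add_zero]
      -- evaluation of F on edges inside a component
      have hFnr : ∀ (c : V) (hc : c ∈ N) (x y : V), (prune G r).Reachable c x →
          (prune G r).Reachable c y → F s(x, y) = fc c hc s(x, y) := by
        intro c hc x y hx hy
        have hxr : x ≠ r := hnr c hc x hx
        have hyr : y ≠ r := hnr c hc y hy
        rw [hFdef]
        dsimp only
        rw [hh0, if_neg hxr, if_neg hyr]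
        rw [Finset.sum_eq_single_of_mem ⟨c, hc⟩ (Finset.mem_attach _ _)]
        · rw [zero_add]
        · intro c' _ hne
          apply (hfc c'.1 c'.2).2.2.2.2.2.1 x y
          left
          intro hx'
          exact prune_comp_disjoint hac ((SimpleGraph.mem_neighborFinset _ _ _).1 hc)
            ((SimpleGraph.mem_neighborFinset _ _ _).1 c'.2)
            (fun he => hne (Subtype.ext he.symm)) hx hx'
      -- weight of r
      have hWtr : Wt G F r = ∑ x ∈ N, a x := by
        rw [Wt]
        apply Finset.sum_congr rfl
        intro x _
        rw [Sym2.eq_swap]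
        exact hFr x
      -- weights of other vertices
      have hWtv : ∀ (c : V) (hc : c ∈ N) (v : V), (prune G r).Reachable c v →
          Wt G F v = Wt (prune G r) (fc c hc) v + (if v = c then a c else 0) := by
        intro c hc v hv
        have hvr : v ≠ r := hnr c hc v hv
        rw [Wt, wt_split (r := r) hvr (fun x => F s(x, v))]
        have heq : ∀ x ∈ (prune G r).neighborFinset v, F s(x, v) = fc c hc s(x, v) := by
          intro x hx
          have hadj : (prune G r).Adj v x := (SimpleGraph.mem_neighborFinset _ _ _).1 hx
          exact hFnr c hc x v (hv.trans hadj.symm.reachable.symm) hv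
        rw [Finset.sum_congr rfl heq]
        rw [← Wt]
        have hif : (if G.Adj r v then F s(r, v) else 0) = (if v = c then a c else 0) := by
          by_cases hadj : G.Adj r v
          · have hvc : v = c := by
              by_contra hne
              exact prune_comp_disjoint hac ((SimpleGraph.mem_neighborFinset _ _ _).1 hc)
                hadj (fun he => hne he.symm) hv (SimpleGraph.Reachable.refl v)
            rw [if_pos hadj, if_pos hvc, hFr, hvc]
          · have hvc : v ≠ c := by
              rintro rfl
              exact hadj ((SimpleGraph.mem_neighborFinset _ _ _).1 hc)
            rw [if_neg hadj, if_neg hvc]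
        rw [hif]
        exact add_comm _ _
      refine ⟨F, ?_, ?_, ?_, ?_, ?_, ?_, ?_⟩
      -- properness
      · intro u v w hru huv huw hvw
        by_cases hur : u = r
        · rw [hur, hFr v, hFr w]
          intro heq
          refine hvw (hInj ?_ ?_ heq)
          · exact Finset.mem_coe.2 ((SimpleGraph.mem_neighborFinset _ _ _).2
              (by rw [← hur]; exact huv))
          · exact Finset.mem_coe.2 ((SimpleGraph.mem_neighborFinset _ _ _).2
              (by rw [← hur]; exact huw))
        · obtain ⟨c, hrc, hcu⟩ := exists_child hru hur
          have hc : c ∈ N := (SimpleGraph.mem_neighborFinset _ _ _).2 hrc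
          by_cases hvr : v = r
          · have hwr : w ≠ r := fun h => hvw (hvr.trans h.symm)
            have hadjru : G.Adj r u := by rw [← hvr]; exact huv.symm
            have huc : u = c := by
              by_contra hne
              exact prune_comp_disjoint hac hrc hadjru (fun he => hne he.symm) hcu
                (SimpleGraph.Reachable.refl u)
            have hpw : (prune G r).Adj u w := prune_adj.2 ⟨huw, hur, hwr⟩
            have h1 : F s(u, v) = a u := by rw [hvr, Sym2.eq_swap]; exact hFr u
            have h2 : F s(u, w) = fc c hc s(u, w) :=
              hFnr c hc u w hcu (hcu.trans hpw.reachable)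
            rw [h1, h2, huc]
            refine ((hfc c hc).2.1 w ?_).symm
            rw [← huc]
            exact hpw
          · by_cases hwr : w = r
            · have hadjru : G.Adj r u := by rw [← hwr]; exact huw.symm
              have huc : u = c := by
                by_contra hne
                exact prune_comp_disjoint hac hrc hadjru (fun he => hne he.symm) hcu
                  (SimpleGraph.Reachable.refl u)
              have hpv : (prune G r).Adj u v := prune_adj.2 ⟨huv, hur, hvr⟩
              have h1 : F s(u, w) = a u := by rw [hwr, Sym2.eq_swap]; exact hFr u
              have h2 : F s(u, v) = fc c hc s(u, v) :=
                hFnr c hc u v hcu (hcu.trans hpv.reachable)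
              rw [h1, h2, huc]
              refine (hfc c hc).2.1 v ?_
              rw [← huc]
              exact hpv
            · have hpv : (prune G r).Adj u v := prune_adj.2 ⟨huv, hur, hvr⟩
              have hpw : (prune G r).Adj u w := prune_adj.2 ⟨huw, hur, hwr⟩
              rw [hFnr c hc u v hcu (hcu.trans hpv.reachable),
                hFnr c hc u w hcu (hcu.trans hpw.reachable)]
              exact (hfc c hc).1 u v w hcu hpv hpw hvw
      -- (C2)
      · intro hf c' hadj
        rw [hFr c']
        exact (hRootF hf).1 c' ((SimpleGraph.mem_neighborFinset _ _ _).2 hadj)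
      -- (C3)
      · intro hf
        rw [hWtr]
        exact (hRootF hf).2
      -- (C4)
      · intro u v hru huv hur hvr
        obtain ⟨c, hrc, hcu⟩ := exists_child hru hur
        have hc : c ∈ N := (SimpleGraph.mem_neighborFinset _ _ _).2 hrc
        have hadjP : (prune G r).Adj u v := prune_adj.2 ⟨huv, hur, hvr⟩
        have hcv : (prune G r).Reachable c v := hcu.trans hadjP.reachable
        rw [hWtv c hc u hcu, hWtv c hc v hcv]
        by_cases huc : u = c
        · have hvc : v ≠ c := fun h => huv.ne (huc.trans h.symm)
          rw [if_pos huc, if_neg hvc, add_zero, huc]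
          intro heq
          refine (hfc c hc).2.2.2.2.1 v ?_ (by linear_combination -heq)
          rw [← huc]
          exact hadjP
        · by_cases hvc : v = c
          · rw [if_neg huc, if_pos hvc, add_zero, hvc]
            intro heq
            refine (hfc c hc).2.2.2.2.1 u ?_ (by linear_combination heq)
            rw [← hvc]
            exact hadjP.symm
          · rw [if_neg huc, if_neg hvc, add_zero, add_zero]
            exact (hfc c hc).2.2.2.1 u v hcu hadjP huc hvc
      -- (C5)
      · intro c' hadj
        have hc' : c' ∈ N := (SimpleGraph.mem_neighborFinset _ _ _).2 hadj
        rw [hWtv c' hc' c' (SimpleGraph.Reachable.refl c'), if_pos rfl, hWtr, ← hW]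
        intro heq
        exact (hfc c' hc').2.2.1 (by linear_combination heq)
      -- (C6)
      · have key : ∀ u v, ¬G.Reachable r u → F s(u, v) = 0 := by
          intro u v hnru
          have hur : u ≠ r := fun h => hnru (by rw [h])
          rw [hFdef]
          dsimp only
          rw [hh0, if_neg hur]
          have hterm : (if v = r then a u else 0) = 0 := by
            by_cases hvr : v = r
            · rw [if_pos hvr]
              apply hOff
              intro hu
              exact hnru ((SimpleGraph.mem_neighborFinset _ _ _).1 hu).reachable
            · rw [if_neg hvr]
          rw [hterm, zero_add]
          apply Finset.sum_eq_zero
          intro c _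
          apply (hfc c.1 c.2).2.2.2.2.2.1 u v
          left
          intro hcu
          exact hnru (prune_reach_to_G ((SimpleGraph.mem_neighborFinset _ _ _).1 c.2) hcu)
        intro u v h
        rcases h with h | h
        · exact key u v h
        · rw [Sym2.eq_swap]
          exact key v u h
      -- (C7)
      · intro u v hnadj
        rw [hFdef]
        dsimp only
        have hh : h0 s(u, v) = 0 := by
          rw [hh0]
          by_cases hur : u = r
          · rw [if_pos hur]
            apply hOff
            intro hv
            exact hnadj (by rw [hur]; exact (SimpleGraph.mem_neighborFinset _ _ _).1 hv)
          · rw [if_neg hur]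
            by_cases hvr : v = r
            · rw [if_pos hvr]
              apply hOff
              intro hu
              exact hnadj (by rw [hvr]; exact ((SimpleGraph.mem_neighborFinset _ _ _).1 hu).symm)
            · rw [if_neg hvr]
        rw [hh, zero_add]
        apply Finset.sum_eq_zero
        intro c _
        exact (hfc c.1 c.2).2.2.2.2.2.2 u v (fun h => hnadj (prune_le h))

end MainInduction

section TopPart

open SimpleGraph

variable {V : Type} [Fintype V] [DecidableEq V]

theorem mainTop (k : ℕ) [NeZero k] (hk5 : 5 ≤ k) (hko : Odd k) :
    ∀ (n : ℕ) (G : SimpleGraph V) [instG : DecidableRel G.Adj], G.edgeFinset.card ≤ n →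
    G.IsAcyclic →
    (∀ u v, G.Adj u v → ¬(G.degree u = 1 ∧ G.degree v = 1)) →
    (∀ v, G.degree v + 2 ≤ k) →
    ∃ f : Sym2 V → ZMod k,
      (∀ u v w, G.Adj u v → G.Adj u w → v ≠ w → f s(u, v) ≠ f s(u, w)) ∧
      (∀ u v, G.Adj u v → Wt G f u ≠ Wt G f v) ∧
      (∀ u v, ¬G.Adj u v → f s(u, v) = 0) := by
  intro n
  induction n with
  | zero =>
    intro G instG hcard hac hiso hdegb
    have hnoadj : ∀ u v, ¬G.Adj u v := by
      intro u v h
      have : s(u, v) ∈ G.edgeFinset := SimpleGraph.mem_edgeFinset.2 (G.mem_edgeSet.2 h)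
      have := Finset.card_pos.2 ⟨_, this⟩
      omega
    exact ⟨fun _ => 0, fun u v w huv _ _ => absurd huv (hnoadj u v),
      fun u v huv => absurd huv (hnoadj u v), fun _ _ _ => rfl⟩
  | succ n IH =>
    intro G instG hcard hac hiso hdegb
    by_cases hE : ∀ u v, ¬G.Adj u v
    · exact ⟨fun _ => 0, fun u v w huv _ _ => absurd huv (hE u v),
        fun u v huv => absurd huv (hE u v), fun _ _ _ => rfl⟩
    · push_neg at hE
      obtain ⟨u0, v0, hadj0⟩ := hE
      obtain ⟨ℓ, hdegℓ⟩ := exists_leaf hac hadj0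
      obtain ⟨p, hp⟩ := Finset.card_eq_one.1 (hdegℓ : (G.neighborFinset ℓ).card = 1)
      have hadjℓp : G.Adj ℓ p := by
        rw [← SimpleGraph.mem_neighborFinset, hp]
        exact Finset.mem_singleton_self p
      have hdp : G.degree p ≠ 1 := by
        have := hiso ℓ p hadjℓp
        tauto
      -- color the component of p
      obtain ⟨fcomp, c1, _, _, c4, c5, c6, c7⟩ :=
        mainS k hk5 hko G.edgeFinset.card G le_rfl hac p (fun v _ => hdegb v) true 0 0
          (by simp) (fun _ => ⟨rfl, hdp, Or.inr ⟨ℓ, hadjℓp.symm, hdegℓ⟩⟩)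
      -- color the rest
      letI instR : ∀ x y : V, Decidable (G.Reachable x y) := fun _ _ => Classical.propDecidable _
      letI instH : DecidableRel (pruneComp G p).Adj :=
        fun _ _ => decidable_of_iff _ pruneComp_adj.symm
      have hcardH : (pruneComp G p).edgeFinset.card ≤ n := by
        have := edgeFinset_card_lt (G := G) (G' := pruneComp G p) pruneComp_le hadjℓp.symm
          (fun h => (pruneComp_adj.1 h).2.1 (SimpleGraph.Reachable.refl p))
        omega
      have hisoH : ∀ u v, (pruneComp G p).Adj u v →
          ¬((pruneComp G p).degree u = 1 ∧ (pruneComp G p).degree v = 1) := by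
        intro u v hadj
        obtain ⟨huv, hnu, hnv⟩ := pruneComp_adj.1 hadj
        rw [SimpleGraph.degree, SimpleGraph.degree, pruneComp_neighborFinset hnu,
          pruneComp_neighborFinset hnv]
        exact hiso u v huv
      have hdegbH : ∀ v, (pruneComp G p).degree v + 2 ≤ k := by
        intro v
        have := pruneComp_degree_le (G := G) (r := p) (v := v)
        have := hdegb v
        omega
      obtain ⟨F2, t1, t2, t3⟩ := IH (pruneComp G p) hcardH (pruneComp_acyclic hac) hisoH hdegbH
      set F : Sym2 V → ZMod k := fun e => fcomp e + F2 e with hF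
      have hE1 : ∀ u v, G.Reachable p u → F s(u, v) = fcomp s(u, v) := by
        intro u v hru
        rw [hF]
        dsimp only
        rw [t3 u v (fun h => (pruneComp_adj.1 h).2.1 hru), add_zero]
      have hE2 : ∀ u v, ¬G.Reachable p u → F s(u, v) = F2 s(u, v) := by
        intro u v hnru
        rw [hF]
        dsimp only
        rw [c6 u v (Or.inl hnru), zero_add]
      have hWt1 : ∀ v, G.Reachable p v → Wt G F v = Wt G fcomp v := by
        intro v hrv
        rw [Wt, Wt]
        apply Finset.sum_congr rfl
        intro x _
        rw [Sym2.eq_swap]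
        rw [hE1 v x hrv, Sym2.eq_swap]
      have hWt2 : ∀ v, ¬G.Reachable p v → Wt G F v = Wt (pruneComp G p) F2 v := by
        intro v hnrv
        rw [Wt, Wt, pruneComp_neighborFinset hnrv]
        apply Finset.sum_congr rfl
        intro x hx
        have hadj : G.Adj v x := (SimpleGraph.mem_neighborFinset _ _ _).1 hx
        have hnrx : ¬G.Reachable p x := fun h => hnrv (h.trans hadj.symm.reachable)
        exact hE2 x v hnrx
      refine ⟨F, ?_, ?_, ?_⟩
      · intro u v w huv huw hvw
        by_cases hru : G.Reachable p u
        · rw [hE1 u v hru, hE1 u w hru]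
          exact c1 u v w hru huv huw hvw
        · rw [hE2 u v hru, hE2 u w hru]
          have hnrv : ¬G.Reachable p v := fun h => hru (h.trans huv.symm.reachable)
          have hnrw : ¬G.Reachable p w := fun h => hru (h.trans huw.symm.reachable)
          exact t1 u v w (pruneComp_adj.2 ⟨huv, hru, hnrv⟩) (pruneComp_adj.2 ⟨huw, hru, hnrw⟩) hvw
      · intro u v huv
        by_cases hru : G.Reachable p u
        · have hrv : G.Reachable p v := hru.trans huv.reachable
          rw [hWt1 u hru, hWt1 v hrv]
          by_cases hup : u = p
          · intro heq
            apply c5 v (by rw [← hup]; exact huv)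
            rw [zero_add, ← heq, hup]
          · by_cases hvp : v = p
            · intro heq
              apply c5 u (by rw [← hvp]; exact huv.symm)
              rw [zero_add, heq, hvp]
            · exact c4 u v hru huv hup hvp
        · have hnrv : ¬G.Reachable p v := fun h => hru (h.trans huv.symm.reachable)
          rw [hWt2 u hru, hWt2 v hnrv]
          exact t2 u v (pruneComp_adj.2 ⟨huv, hru, hnrv⟩)
      · intro u v hnadj
        rw [hF]
        dsimp only
        rw [c7 u v hnadj, t3 u v (fun h => hnadj (pruneComp_le h)), add_zero]

end TopPart

/-- A `𝒢`-twin edge coloring of `G`: a proper edge labeling `f : E(G) → 𝒢` such that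
the induced weighted degrees `w(v) = ∑_{u ∈ N(v)} f(uv)` differ on adjacent vertices. -/
def IsTwinEdgeColoring {V : Type} [Fintype V] (G : SimpleGraph V) [DecidableRel G.Adj]
    {A : Type} [AddCommGroup A] (f : Sym2 V → A) : Prop :=
  (∀ u v w : V, G.Adj u v → G.Adj u w → v ≠ w → f s(u, v) ≠ f s(u, w)) ∧
  (∀ u v : V, G.Adj u v →
    ∑ x ∈ G.neighborFinset u, f s(x, u) ≠ ∑ x ∈ G.neighborFinset v, f s(x, v))


/-- The set of integers `k ≥ 2` such that `G` has a `ℤ_k`-twin edge coloring.  The twin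
chromatic index `χ'_t(G)` is the least element of this set. -/
def TwinSetZ {V : Type} [Fintype V] (G : SimpleGraph V) [DecidableRel G.Adj] : Set ℕ :=
  {k | 2 ≤ k ∧ ∃ f : Sym2 V → ZMod k, IsTwinEdgeColoring G f}

/-- If `G` is a forest containing no isolated edges, then `χ'_t(G) ≤ Δ(G) + 2` if
`Δ(G)` is odd, and `χ'_t(G) ≤ Δ(G) + 3` otherwise. -/
theorem forest_twinChromaticIndex_le {V : Type} [Fintype V] (G : SimpleGraph V)
    [DecidableRel G.Adj] (hforest : G.IsAcyclic)
    (hnoiso : ∀ u v : V, G.Adj u v → ¬ (G.degree u = 1 ∧ G.degree v = 1)) :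
    (Odd G.maxDegree → ∃ k ∈ TwinSetZ G, k ≤ G.maxDegree + 2) ∧
    (∃ k ∈ TwinSetZ G, k ≤ G.maxDegree + 3) := by
  letI : DecidableEq V := Classical.decEq V
  by_cases hE : ∀ u v, ¬G.Adj u v
  · have hmem : (2 : ℕ) ∈ TwinSetZ G := by
      refine ⟨le_refl 2, fun _ => 0, ?_, ?_⟩
      · intro u v w huv _ _
        exact absurd huv (hE u v)
      · intro u v huv
        exact absurd huv (hE u v)
    exact ⟨fun _ => ⟨2, hmem, by omega⟩, ⟨2, hmem, by omega⟩⟩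
  · push_neg at hE
    obtain ⟨u0, v0, hadj0⟩ := hE
    have hd1 : 1 ≤ G.degree u0 :=
      Finset.card_pos.2 ⟨v0, (SimpleGraph.mem_neighborFinset _ _ _).2 hadj0⟩
    have hd1' : 1 ≤ G.degree v0 :=
      Finset.card_pos.2 ⟨u0, (SimpleGraph.mem_neighborFinset _ _ _).2 hadj0.symm⟩
    have hd2 : 2 ≤ G.maxDegree := by
      have h1 := G.degree_le_maxDegree u0
      have h2 := G.degree_le_maxDegree v0
      have h3 := hnoiso u0 v0 hadj0
      rcases Nat.lt_or_ge (G.degree u0) 2 with h | h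
      · have : G.degree u0 = 1 := by omega
        rcases Nat.lt_or_ge (G.degree v0) 2 with h' | h'
        · exact absurd ⟨this, by omega⟩ h3
        · omega
      · omega
    have main : ∀ k' : ℕ, 5 ≤ k' → Odd k' → G.maxDegree + 2 ≤ k' → k' ∈ TwinSetZ G := by
      intro k' h5 hodd hbound
      haveI : NeZero k' := ⟨by omega⟩
      obtain ⟨f, p1, p2, _⟩ := mainTop k' h5 hodd G.edgeFinset.card G le_rfl hforest hnoiso
        (fun v => by have := G.degree_le_maxDegree v; omega)
      exact ⟨by omega, f, p1, fun u v huv => p2 u v huv⟩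
    constructor
    · intro hodd
      obtain ⟨j, hj⟩ := hodd
      refine ⟨G.maxDegree + 2, main _ (by omega) ⟨j + 1, by omega⟩ le_rfl, le_rfl⟩
    · by_cases hodd : Odd G.maxDegree
      · obtain ⟨j, hj⟩ := hodd
        exact ⟨G.maxDegree + 2, main _ (by omega) ⟨j + 1, by omega⟩ le_rfl, by omega⟩
      · have heven : Even G.maxDegree := Nat.not_odd_iff_even.1 hodd
        obtain ⟨j, hj⟩ := heven
        exact ⟨G.maxDegree + 3, main _ (by omega) ⟨j + 1, by omega⟩ (by omega), le_rfl⟩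
end

section
/- For every integer p ≥ 3, the star K_{1, 2^p − 3} has no (ℤ_2)^p-twin edge coloring; that is, there is no proper edge labeling f : E(K_{1, 2^p−3}) → (ℤ_2)^p such that the induced sums w(v) = Σ_{u ∈ N(v)} f(uv) are distinct on every pair of adjacent vertices. -/
open Finset SimpleGraph

/-- Auxiliary: there is no injection `g` from `2^p - 3` elements into `(ℤ₂)^p`
whose total sum avoids all of its values. -/
lemma star_no_twin_aux (p : ℕ) (hp : 3 ≤ p)
    (g : Fin (2 ^ p - 3) → (Fin p → ZMod 2))
    (ginj : Function.Injective g)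
    (hWne : ∀ v, (∑ u, g u) ≠ g v) : False := by
  classical
  have hadd : ∀ x : Fin p → ZMod 2, x + x = 0 := by
    intro x; funext i
    have : ∀ a : ZMod 2, a + a = 0 := by decide
    simp [this]
  have hsum0 : ∑ x : Fin p → ZMod 2, x = 0 := by
    funext i
    rw [Finset.sum_apply]
    have h : ∑ x : Fin p → ZMod 2, x i = ∑ y : ZMod 2 × ({j : Fin p // j ≠ i} → ZMod 2), y.1 :=
      Fintype.sum_bijective (Equiv.funSplitAt i (ZMod 2))
        (Equiv.bijective _) _ _ (fun x => by
          simp [Equiv.funSplitAt, Equiv.piSplitAt])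
    rw [h, Fintype.sum_prod_type]
    simp only [Finset.sum_const]
    rw [← Finset.smul_sum]
    have h1 : ∑ a : ZMod 2, a = 1 := by decide
    have hcard : Fintype.card ({j : Fin p // j ≠ i} → ZMod 2) = 2 ^ (p - 1) := by
      simp [Fintype.card_fun, Fintype.card_subtype_compl]
    rw [h1, Finset.card_univ, hcard]
    have h2 : (2:ℕ) ∣ 2 ^ (p-1) := dvd_pow_self 2 (by omega)
    rw [nsmul_eq_mul, mul_one]
    exact_mod_cast (ZMod.natCast_eq_zero_iff _ 2).2 h2
  set T : Finset (Fin p → ZMod 2) := Finset.univ.image g with hT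
  have hTcard : T.card = 2 ^ p - 3 := by
    rw [hT, Finset.card_image_of_injective _ ginj]
    simp
  have hunivcard : Fintype.card (Fin p → ZMod 2) = 2 ^ p := by
    simp [Fintype.card_fun]
  have hccard : Tᶜ.card = 3 := by
    rw [Finset.card_compl, hTcard, hunivcard]
    have : 3 ≤ 2 ^ p := le_trans (by norm_num) (Nat.pow_le_pow_right (by norm_num) hp)
    omega
  have hWT : (∑ u, g u) ∈ Tᶜ := by
    rw [Finset.mem_compl, hT]
    intro h
    obtain ⟨v, _, hv⟩ := Finset.mem_image.1 h
    exact hWne v hv.symm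
  obtain ⟨a, b, c, hab, hac, hbc, habc⟩ := Finset.card_eq_three.1 hccard
  have hsplit : ∑ x ∈ T, x + ∑ x ∈ Tᶜ, x = 0 := by
    rw [Finset.sum_add_sum_compl]
    exact hsum0
  have hTsum : ∑ x ∈ T, x = ∑ u, g u := by
    rw [hT, Finset.sum_image (fun x _ y _ h => ginj h)]
  have hcsum : ∑ x ∈ Tᶜ, x = a + b + c := by
    rw [habc]
    rw [Finset.sum_insert (by simp [hab, hac]), Finset.sum_insert (by simp [hbc]),
      Finset.sum_singleton, add_assoc]
  have hWabc : (∑ u, g u) = a + b + c := by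
    have h := hsplit
    rw [hTsum, hcsum] at h
    have h3 := hadd (a + b + c)
    have h2 : (∑ u, g u) + (a+b+c) + (a+b+c) = (a+b+c) := by rw [h]; simp
    rwa [add_assoc, h3, add_zero] at h2
  rw [habc] at hWT
  simp only [Finset.mem_insert, Finset.mem_singleton] at hWT
  rw [hWabc] at hWT
  have cancel : ∀ x y : Fin p → ZMod 2, x + y = 0 → x = y := by
    intro x y h
    calc x = x + (y + y) := by rw [hadd y, add_zero]
    _ = (x + y) + y := by rw [add_assoc]
    _ = y := by rw [h, zero_add]
  rcases hWT with h | h | h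
  · have h' : a + (b + c) = a + 0 := by rw [add_zero, ← add_assoc]; exact h
    exact hbc (cancel b c (add_left_cancel h'))
  · have h' : b + (a + c) = b + 0 := by
      rw [add_zero, show b + (a + c) = a + b + c by abel]; exact h
    exact hac (cancel a c (add_left_cancel h'))
  · have h' : c + (a + b) = c + 0 := by
      rw [add_zero, show c + (a + b) = a + b + c by abel]; exact h
    exact hab (cancel a b (add_left_cancel h'))

/-- For every integer `p ≥ 3`, the star `K_{1, 2^p - 3}` has no `(ℤ₂)^p`-twin edge
coloring. -/
theorem star_no_twin_coloring (p : ℕ) (hp : 3 ≤ p) :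
    ¬ ∃ f : Sym2 (Fin 1 ⊕ Fin (2 ^ p - 3)) → (Fin p → ZMod 2),
      @IsTwinEdgeColoring _ _ (completeBipartiteGraph (Fin 1) (Fin (2 ^ p - 3)))
        (Classical.decRel _) _ _ f := by
  rintro ⟨f, h1, h2⟩
  classical
  have hadj : ∀ v : Fin (2 ^ p - 3),
      (completeBipartiteGraph (Fin 1) (Fin (2 ^ p - 3))).Adj (Sum.inl 0) (Sum.inr v) := by
    intro v; simp
  have Nc : @neighborFinset _ (completeBipartiteGraph (Fin 1) (Fin (2 ^ p - 3)))
        (Sum.inl 0) (SimpleGraph.neighborSetFintype _ _)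
      = Finset.univ.map ⟨Sum.inr, Sum.inr_injective⟩ := by
    ext x
    cases x with
    | inl a => simp [mem_neighborFinset]
    | inr b => simp [mem_neighborFinset]
  have Nl : ∀ v : Fin (2 ^ p - 3), @neighborFinset _
        (completeBipartiteGraph (Fin 1) (Fin (2 ^ p - 3)))
        (Sum.inr v) (SimpleGraph.neighborSetFintype _ _) = {Sum.inl 0} := by
    intro v
    ext x
    cases x with
    | inl a => simp [mem_neighborFinset, Fin.eq_zero a]
    | inr b => simp [mem_neighborFinset]
  have ginj : Function.Injective (fun v : Fin (2 ^ p - 3) => f s(Sum.inl 0, Sum.inr v)) := by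
    intro a b hab
    by_contra hne
    exact h1 _ _ _ (hadj a) (hadj b) (by simpa using hne) hab
  have hWne : ∀ v : Fin (2 ^ p - 3),
      (∑ u : Fin (2 ^ p - 3), f s(Sum.inl 0, Sum.inr u)) ≠ f s(Sum.inl 0, Sum.inr v) := by
    intro v
    have h := h2 (Sum.inl 0) (Sum.inr v) (hadj v)
    rw [Nc, Nl v] at h
    simpa [Finset.sum_map, Sym2.eq_swap] using h
  exact star_no_twin_aux p hp _ ginj hWne
end

section
/- For every integer p ≥ 3, every (2^p − 3)-regular tree has no (ℤ_2)^p-twin edge coloring. -/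
open Finset SimpleGraph

/-- A tree is `r`-regular if every non-leaf vertex has degree `r`. -/
def IsRegularTreeDeg {V : Type} [Fintype V] (G : SimpleGraph V) [DecidableRel G.Adj]
    (r : ℕ) : Prop :=
  ∀ v : V, G.degree v ≠ 1 → G.degree v = r

section AuxTree

variable {V : Type} {G : SimpleGraph V}

/-- If `P` is a shortest walk from `r` to `a` and `b ≠ a` lies on it,
then `dist r b < dist r a`. -/
private lemma dist_lt_of_mem_shortest {r a b : V} (P : G.Walk r a)
    (hlen : P.length = G.dist r a) (hb : b ∈ P.support) (hne : b ≠ a) :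
    G.dist r b < G.dist r a := by
  classical
  have h1 : G.dist r b ≤ (P.takeUntil b hb).length := SimpleGraph.dist_le _
  have hspec : (P.takeUntil b hb).append (P.dropUntil b hb) = P := Walk.take_spec _ hb
  have hlen2 : (P.takeUntil b hb).length + (P.dropUntil b hb).length = P.length := by
    rw [← Walk.length_append, hspec]
  have hdrop : (P.dropUntil b hb).length ≠ 0 := fun h0 =>
    hne (Walk.eq_of_length_eq_zero h0)
  omega

private lemma concat_isPath' {u v x : V} {p : G.Walk u v} (hp : p.IsPath) (h : G.Adj v x)
    (hx : x ∉ p.support) : (p.concat h).IsPath := by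
  rw [← Walk.isPath_reverse_iff, Walk.reverse_concat]
  exact Walk.IsPath.cons (hp.reverse) (by simpa [Walk.support_reverse] using hx)

/-- In a tree, adjacent vertices are at different distances from any root. -/
private lemma tree_dist_ne {r a b : V} (hT : G.IsTree) (hab : G.Adj a b) :
    G.dist r a ≠ G.dist r b := by
  classical
  wlog hle : G.dist r a ≤ G.dist r b generalizing a b
  · exact fun h => this hab.symm (by omega) h.symm
  intro heq
  obtain ⟨P, hP, hPlen⟩ := hT.isConnected.exists_path_of_dist r a
  have hbP : b ∉ P.support := fun hmem =>
    absurd (dist_lt_of_mem_shortest P hPlen hmem hab.ne') (by omega)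
  have hP' : (P.concat hab).IsPath := concat_isPath' hP hab hbP
  obtain ⟨Q, hQ, hQlen⟩ := hT.isConnected.exists_path_of_dist r b
  have := (hT.existsUnique_path r b).unique hP' hQ
  have : (P.concat hab).length = Q.length := by rw [this]
  rw [Walk.length_concat, hPlen, hQlen] at this
  omega

/-- In a tree, a vertex has a unique neighbour strictly closer to the root. -/
private lemma tree_unique_parent {r a b c : V} (hT : G.IsTree) (hba : G.Adj b a)
    (hbc : G.Adj b c) (ha : G.dist r a + 1 = G.dist r b) (hc : G.dist r c + 1 = G.dist r b) :
    a = c := by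
  classical
  obtain ⟨P, hP, hPlen⟩ := hT.isConnected.exists_path_of_dist r a
  have hbP : b ∉ P.support := fun hmem =>
    absurd (dist_lt_of_mem_shortest P hPlen hmem hba.ne) (by omega)
  obtain ⟨Q, hQ, hQlen⟩ := hT.isConnected.exists_path_of_dist r c
  have hbQ : b ∉ Q.support := fun hmem =>
    absurd (dist_lt_of_mem_shortest Q hQlen hmem hbc.ne) (by omega)
  have hP' : (P.concat hba.symm).IsPath := concat_isPath' hP hba.symm hbP
  have hQ' : (Q.concat hbc.symm).IsPath := concat_isPath' hQ hbc.symm hbQ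
  have heq : P.concat hba.symm = Q.concat hbc.symm :=
    (hT.existsUnique_path r b).unique hP' hQ'
  have := congrArg (fun (W : G.Walk r b) => W.reverse.getVert 1) heq
  simpa [Walk.reverse_concat, Walk.getVert_cons_succ, Walk.getVert_zero] using this

/-- A finite tree carries no infinite non-backtracking walk. -/
private lemma no_infinite_nonbacktracking [Fintype V] (hT : G.IsTree) (seq : ℕ → V)
    (hadj : ∀ n, G.Adj (seq n) (seq (n + 1))) (hnb : ∀ n, seq (n + 2) ≠ seq n) : False := by
  have hconn := hT.isConnected
  have key : ∀ n, G.dist (seq 0) (seq n) = n ∧ G.dist (seq 0) (seq (n + 1)) = n + 1 := by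
    intro n
    induction n with
    | zero => exact ⟨by simp, SimpleGraph.dist_eq_one_iff_adj.mpr (hadj 0)⟩
    | succ n ih =>
      obtain ⟨ih1, ih2⟩ := ih
      refine ⟨ih2, ?_⟩
      show G.dist (seq 0) (seq (n + 2)) = n + 2
      have h1 : G.dist (seq 0) (seq (n + 2)) ≤ G.dist (seq 0) (seq (n + 1)) +
          G.dist (seq (n + 1)) (seq (n + 2)) := hconn.dist_triangle
      have he1 : G.dist (seq (n + 1)) (seq (n + 2)) = 1 :=
        SimpleGraph.dist_eq_one_iff_adj.mpr (hadj (n + 1))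
      have h2 : G.dist (seq 0) (seq (n + 1)) ≤ G.dist (seq 0) (seq (n + 2)) +
          G.dist (seq (n + 2)) (seq (n + 1)) := hconn.dist_triangle
      have he2 : G.dist (seq (n + 2)) (seq (n + 1)) = 1 := by
        rw [SimpleGraph.dist_comm]; exact he1
      have ih2' : G.dist (seq 0) (seq (n + 1)) = n + 1 := ih2
      have h3 : G.dist (seq 0) (seq (n + 2)) ≠ n + 1 := by
        have := tree_dist_ne (r := seq 0) hT (hadj (n + 1))
        rw [ih2'] at this
        have this2 : n + 1 ≠ G.dist (seq 0) (seq (n + 2)) := this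
        omega
      have h4 : G.dist (seq 0) (seq (n + 2)) ≠ n := by
        intro h
        exact hnb n (tree_unique_parent (r := seq 0) hT (hadj (n + 1)) (hadj n).symm
          (by omega) (by omega))
      omega
  have hinj : Function.Injective (fun n : Fin (Fintype.card V + 1) => seq n) := by
    intro m n h
    have hm := (key m).1
    have hn := (key n).1
    simp only at h
    rw [h, hn] at hm
    exact Fin.ext hm.symm
  have := Fintype.card_le_of_injective _ hinj
  simp at this

end AuxTree

/-- The sum of all elements of `(ℤ₂)^p` vanishes when `p ≥ 2`. -/
private lemma sum_univ_vec_zero {p : ℕ} (hp : 2 ≤ p) : ∑ x : Fin p → ZMod 2, x = 0 := by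
  funext j
  rw [Finset.sum_apply]
  obtain ⟨i, hij⟩ : ∃ i : Fin p, i ≠ j :=
    Fintype.exists_ne_of_one_lt_card (by simp; omega) j
  set σ : (Fin p → ZMod 2) → (Fin p → ZMod 2) := fun x => x + Pi.single i (x j) with hσ
  have hchar : ∀ y : ZMod 2, y + y = 0 := by decide
  have hσj : ∀ x, σ x j = x j := by
    intro x
    simp [hσ, Pi.single_eq_of_ne hij.symm]
  have hinv : Function.Involutive σ := by
    intro x
    have h1 : σ x j = x j := hσj x
    show σ x + Pi.single i (σ x j) = x
    rw [h1]
    show x + Pi.single i (x j) + Pi.single i (x j) = x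
    rw [add_assoc]
    convert add_zero x
    funext k
    by_cases hk : k = i
    · subst hk; simp [Pi.single_eq_same, hchar]
    · simp [Pi.single_eq_of_ne hk]
  have hre : ∑ x : Fin p → ZMod 2, σ x i = ∑ x : Fin p → ZMod 2, x i :=
    Fintype.sum_bijective σ hinv.bijective _ _ (fun x => rfl)
  have hval : ∀ x : Fin p → ZMod 2, σ x i = x i + x j := by
    intro x; simp [hσ, Pi.single_eq_same]
  rw [Finset.sum_congr rfl (fun x _ => hval x), Finset.sum_add_distrib] at hre
  have hz : ∑ x : Fin p → ZMod 2, x j = 0 := by rwa [add_eq_left] at hre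
  simpa using hz

/-- Core step: every internal vertex has an internal neighbour `u` such that the label of
the edge `uv` equals the weight of `v`. -/
private lemma key_step {V : Type} [Fintype V] (T : SimpleGraph V)
    [DecidableRel T.Adj] (p : ℕ) (hp : 3 ≤ p)
    (hreg : ∀ v : V, T.degree v ≠ 1 → T.degree v = 2 ^ p - 3)
    (f : Sym2 V → (Fin p → ZMod 2)) (hf : IsTwinEdgeColoring T f)
    (w : V → (Fin p → ZMod 2)) (hwdef : ∀ v, w v = ∑ x ∈ T.neighborFinset v, f s(x, v)) :
    ∀ v : V, T.degree v ≠ 1 → ∃ u : V, T.Adj v u ∧ T.degree u ≠ 1 ∧ f s(u, v) = w v := by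
  classical
  obtain ⟨hprop, hwadj⟩ := hf
  have h2p : (8 : ℕ) ≤ 2 ^ p := by
    calc (8 : ℕ) = 2 ^ 3 := rfl
    _ ≤ 2 ^ p := Nat.pow_le_pow_right (by norm_num) hp
  have hchar : ∀ x : Fin p → ZMod 2, x + x = 0 := by
    intro x; funext i
    have : ∀ y : ZMod 2, y + y = 0 := by decide
    exact this (x i)
  have heq_of_add : ∀ x y : Fin p → ZMod 2, x + y = 0 → x = y := by
    intro x y h
    have : x + (y + y) = (x + y) + y := (add_assoc x y y).symm
    rw [hchar y, h, add_zero, zero_add] at this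
    exact this
  intro v hv
  have hdeg : T.degree v = 2 ^ p - 3 := hreg v hv
  set N := T.neighborFinset v with hN
  have hinj : Set.InjOn (fun x => f s(x, v)) N := by
    intro x hx y hy hxy
    by_contra hne
    apply hprop v x y (by rwa [← mem_neighborFinset]) (by rwa [← mem_neighborFinset]) hne
    rw [show s(v, x) = s(x, v) from Sym2.eq_swap, show s(v, y) = s(y, v) from Sym2.eq_swap]
    exact hxy
  set L := N.image (fun x => f s(x, v)) with hL
  have hcardL : L.card = 2 ^ p - 3 := by
    rw [hL, Finset.card_image_of_injOn hinj]
    exact hdeg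
  have hwv : w v = ∑ a ∈ L, a := by
    rw [hwdef, hL, Finset.sum_image (fun x hx y hy => hinj hx hy)]
  have hcardA : Fintype.card (Fin p → ZMod 2) = 2 ^ p := by simp [Fintype.card_fun]
  have hsplit : ∑ a ∈ L, a + ∑ a ∈ Lᶜ, a = 0 := by
    exact (Finset.sum_add_sum_compl L (fun a => a)).trans (sum_univ_vec_zero (by omega))
  have hwv' : w v = ∑ a ∈ Lᶜ, a := by
    rw [hwv]; exact heq_of_add _ _ hsplit
  have hcardM : Lᶜ.card = 3 := by
    rw [Finset.card_compl, hcardL, hcardA]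
    omega
  obtain ⟨a, b, c, hab, hac, hbc, hM⟩ := Finset.card_eq_three.mp hcardM
  have hsumM : ∑ x ∈ Lᶜ, x = a + b + c := by
    rw [hM]
    rw [Finset.sum_insert (by simp [hab, hac]), Finset.sum_insert (by simp [hbc]),
      Finset.sum_singleton, add_assoc]
  have hne_of : ∀ x y z : Fin p → ZMod 2, y ≠ z → x + y + z ≠ x := by
    intro x y z hyz h
    apply hyz
    apply heq_of_add
    have : x + (y + z) = x + 0 := by rw [← add_assoc, h, add_zero]
    exact add_left_cancel this
  have hnotM : w v ∉ Lᶜ := by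
    rw [hM, hwv', hsumM]
    simp only [Finset.mem_insert, Finset.mem_singleton]
    push_neg
    refine ⟨hne_of a b c hbc, fun h => hne_of b a c hac ?_, fun h => hne_of c a b hab ?_⟩
    · calc b + a + c = a + b + c := by abel
        _ = b := h
    · calc c + a + b = a + b + c := by abel
        _ = c := h
  have hmemL : w v ∈ L := by
    by_contra h
    exact hnotM (Finset.mem_compl.mpr h)
  obtain ⟨u, huN, hueq⟩ := Finset.mem_image.mp hmemL
  have hadj : T.Adj v u := by rwa [← mem_neighborFinset]
  refine ⟨u, hadj, ?_, hueq⟩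
  intro h1
  obtain ⟨z, hz⟩ := Finset.card_eq_one.mp (h1 ▸ rfl : (T.neighborFinset u).card = 1)
  have hvz : v ∈ T.neighborFinset u := (mem_neighborFinset _ _ _).mpr hadj.symm
  rw [hz, Finset.mem_singleton] at hvz
  subst hvz
  have hwu : w u = f s(u, v) := by
    rw [hwdef, hz, Finset.sum_singleton, Sym2.eq_swap]
  exact hwadj v u hadj (by rw [← hwdef, ← hwdef, ← hueq, hwu])

/-- For every integer `p ≥ 3`, every `(2^p - 3)`-regular tree has no `(ℤ₂)^p`-twin edge
coloring. -/
theorem regular_tree_no_Z2p_twin_coloring {V : Type} [Fintype V] (T : SimpleGraph V)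
    [DecidableRel T.Adj] (hT : T.IsTree) (p : ℕ) (hp : 3 ≤ p)
    (hreg : IsRegularTreeDeg T (2 ^ p - 3)) :
    ¬ ∃ f : Sym2 V → (Fin p → ZMod 2), IsTwinEdgeColoring T f := by
  classical
  rintro ⟨f, hf⟩
  set w : V → (Fin p → ZMod 2) := fun v => ∑ x ∈ T.neighborFinset v, f s(x, v) with hwdef
  have hwadj := hf.2
  have key := key_step T p hp hreg f hf w (fun v => rfl)
  by_cases hI : ∃ v : V, T.degree v ≠ 1
  · obtain ⟨v0, hv0⟩ := hI
    choose g hg1 hg2 hg3 using key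
    let S := {v : V // T.degree v ≠ 1}
    let gS : S → S := fun v => ⟨g v.1 v.2, hg2 v.1 v.2⟩
    let seq : ℕ → S := fun n => gS^[n] ⟨v0, hv0⟩
    have hseq : ∀ n, seq (n + 1) = gS (seq n) := fun n =>
      Function.iterate_succ_apply' gS n ⟨v0, hv0⟩
    have hadj : ∀ n, T.Adj (seq n).1 (seq (n + 1)).1 := by
      intro n
      rw [hseq n]
      exact hg1 (seq n).1 (seq n).2
    have hlab : ∀ n, f s((seq (n + 1)).1, (seq n).1) = w (seq n).1 := by
      intro n
      rw [hseq n]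
      exact hg3 (seq n).1 (seq n).2
    have hnb : ∀ n, (seq (n + 2)).1 ≠ (seq n).1 := by
      intro n h
      have h1 := hlab (n + 1)
      rw [show ((n : ℕ) + 1) + 1 = n + 2 from rfl] at h1
      rw [h] at h1
      have h0 := hlab n
      rw [show s((seq n).1, (seq (n + 1)).1) = s((seq (n + 1)).1, (seq n).1) from
        Sym2.eq_swap] at h1
      exact hwadj (seq n).1 (seq (n + 1)).1 (hadj n) (by show w (seq n).1 = w (seq (n + 1)).1; rw [← h0]; exact h1)
    exact no_infinite_nonbacktracking hT (fun n => (seq n).1) hadj hnb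
  · push_neg at hI
    obtain ⟨v⟩ := hT.isConnected.nonempty
    obtain ⟨u, hu⟩ := Finset.card_eq_one.mp (hI v : T.degree v = 1)
    have hadj : T.Adj v u := by
      rw [← mem_neighborFinset, hu]
      exact Finset.mem_singleton_self u
    obtain ⟨z, hz⟩ := Finset.card_eq_one.mp (hI u : T.degree u = 1)
    have hvz : v ∈ T.neighborFinset u := (mem_neighborFinset _ _ _).mpr hadj.symm
    rw [hz, Finset.mem_singleton] at hvz
    subst hvz
    apply hwadj v u hadj
    rw [hu, hz, Finset.sum_singleton, Finset.sum_singleton, Sym2.eq_swap]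
end

section
/- If T is a tree with even maximum degree Δ(T) ≥ 6, then for every Abelian group 𝒢 of odd order |𝒢| ≥ Δ(T) + 3 there exists a nowhere-zero 𝒢-twin edge coloring of T. -/
/-!
Root the tree at a leaf `r` and label the edges top-down. The edges from a vertex `v ≠ r` to its
children get a set `X` of distinct nonzero labels avoiding the label `a` of the edge above `v`,
such that the weight `a + ∑ X` of `v` lies outside `X` (this separates `v` from its leaf children)
and differs from the weight of the parent of `v`. The single edge at `r` gets any nonzero label;
the neighbour of `r` is not a leaf since `Δ(T) ≥ 2`, so its own choice separates it from `r`.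

In a group of odd order `n` such an `X` exists for every `1 ≤ #X ≤ n - 4`, because there the
sum of a subset avoiding `{0, a}` can be prescribed: the elements of the group sum to `0`, and
halving is possible.
-/

open Finset SimpleGraph

section LabelSets

variable {V A : Type} [AddCommGroup A]

/-- Labels for the edges from a vertex to its children, given the label `a` of the edge to its
parent and the weight `W` of that parent; `a + ∑ X` is the weight of the vertex. -/
def IsAdmissibleLabelSet (a W : A) (X : Finset A) : Prop :=
  0 ∉ X ∧ a ∉ X ∧ a + ∑ x ∈ X, x ∉ X ∧ a + ∑ x ∈ X, x ≠ W

theorem isAdmissibleLabelSet_of_sum {a W : A} {X : Finset A} (h0 : 0 ∉ X) (ha : a ∉ X)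
    (hs : a + ∑ x ∈ X, x = 0 ∨ a + ∑ x ∈ X, x = a) (hW : a + ∑ x ∈ X, x ≠ W) :
    IsAdmissibleLabelSet a W X :=
  ⟨h0, ha, by rcases hs with hs | hs <;> rwa [hs], hW⟩

def IsGoodChildLabeling (C : Finset V) (a W : A) (φ : V → A) : Prop :=
  Set.InjOn φ C ∧ (∀ c ∈ C, φ c ≠ 0 ∧ φ c ≠ a ∧ φ c ≠ a + ∑ c ∈ C, φ c) ∧
    (C.Nonempty → a + ∑ c ∈ C, φ c ≠ W)

variable [Fintype A]

theorem two_nsmul_bijective_of_odd_card (hodd : Odd (Fintype.card A)) :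
    Function.Bijective (fun x : A => 2 • x) :=
  Nat.Coprime.nsmul_right_bijective (by rwa [Nat.card_eq_fintype_card, Nat.coprime_two_right])

theorem sum_univ_eq_zero_of_odd_card (hodd : Odd (Fintype.card A)) : ∑ x : A, x = 0 := by
  have h := Fintype.sum_bijective _ (two_nsmul_bijective_of_odd_card hodd) (fun x => 2 • x)
    (fun x => x) (fun _ => rfl)
  rwa [← Finset.smul_sum, two_nsmul, add_eq_left] at h

/-- After `m - 2` arbitrary elements outside `B`, add `y` and `t' - y`, where `t'` is the missing
sum; these must avoid each other and the elements chosen before, which excludes at most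
`2 (m - 2 + #B) + 1` values of `y` (the halving map is a bijection). -/
theorem exists_card_eq_disjoint_sum_eq (hodd : Odd (Fintype.card A)) (B : Finset A) (t : A)
    {m : ℕ} (hm : 2 ≤ m) (hmB : 2 * (m + #B) < Fintype.card A + 3) :
    ∃ Z : Finset A, #Z = m ∧ Disjoint Z B ∧ ∑ z ∈ Z, z = t := by
  classical
  obtain ⟨Z₀, hZ₀B, hZ₀⟩ : ∃ Z₀ ⊆ univ \ B, #Z₀ = m - 2 :=
    exists_subset_card_eq (by rw [card_sdiff_of_subset (subset_univ _), card_univ]; omega)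
  set t' := t - ∑ z ∈ Z₀, z
  obtain ⟨h, hh⟩ := (two_nsmul_bijective_of_odd_card hodd).surjective t'
  set C := Z₀ ∪ B
  have hC : #C ≤ m - 2 + #B := hZ₀ ▸ card_union_le _ _
  obtain ⟨y, -, hy⟩ := exists_mem_notMem_of_card_lt_card (t := univ)
    (s := C ∪ C.image (t' - ·) ∪ {h}) (by
      have := card_union_le (C ∪ C.image (t' - ·)) {h}
      have := card_union_le C (C.image (t' - ·))
      have := card_image_le (s := C) (f := (t' - ·))
      rw [card_univ, card_singleton] at *
      omega)
  simp only [mem_union, mem_image, mem_singleton, not_or, not_exists, not_and] at hy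
  obtain ⟨⟨hyC, hyC'⟩, hyh⟩ := hy
  have hzC : t' - y ∉ C := fun hz => hyC' _ hz (sub_sub_cancel _ _)
  have hzy : t' - y ≠ y := fun hzy => hyh <| (two_nsmul_bijective_of_odd_card hodd).injective <| by
    simp only [hh, two_nsmul]
    nth_rw 1 [← hzy]
    exact sub_add_cancel t' y
  have hyZ₀ : y ∉ Z₀ := fun hy => hyC (mem_union_left _ hy)
  have hzZ₀ : t' - y ∉ Z₀ := fun hz => hzC (mem_union_left _ hz)
  refine ⟨insert y (insert (t' - y) Z₀), ?_, ?_, ?_⟩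
  · rw [card_insert_of_notMem (by simp [hzy.symm, hyZ₀]), card_insert_of_notMem hzZ₀]
    omega
  · simp only [disjoint_insert_left]
    exact ⟨fun hy => hyC (mem_union_right _ hy), fun hz => hzC (mem_union_right _ hz),
      disjoint_left.mpr fun z hz => (mem_sdiff.mp (hZ₀B hz)).2⟩
  · rw [sum_insert (by simp [hzy.symm, hyZ₀]), sum_insert hzZ₀]
    simp only [t']
    abel

/-- For `k = 1` take any `{y}`; otherwise `a + ∑ X` is made equal to `0` or `a` (whichever is
not `W`) by prescribing the sum of `X`, or, when `k` is large, of the complement of `X ∪ {0, a}`. -/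
theorem exists_isAdmissibleLabelSet (hodd : Odd (Fintype.card A)) {a : A} (ha : a ≠ 0) (W : A)
    {k : ℕ} (hk : 0 < k) (hkA : k + 4 ≤ Fintype.card A) :
    ∃ X : Finset A, #X = k ∧ IsAdmissibleLabelSet a W X := by
  classical
  obtain ⟨e, he, heW⟩ : ∃ e : A, (e = 0 ∨ e = a) ∧ e ≠ W := by
    by_cases hW : W = 0
    · exact ⟨a, .inr rfl, hW ▸ ha⟩
    · exact ⟨0, .inl rfl, Ne.symm hW⟩
  have h0a : #({0, a} : Finset A) ≤ 2 := card_le_two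
  rcases (by omega : k = 1 ∨ (2 ≤ k ∧ 2 * k + 1 < Fintype.card A) ∨ Fintype.card A ≤ 2 * k + 1)
    with rfl | ⟨hk2, hsmall⟩ | hlarge
  · obtain ⟨y, -, hy⟩ := exists_mem_notMem_of_card_lt_card (t := univ) (s := {0, a, W - a}) (by
      have := card_insert_le (0 : A) {a, W - a}
      have : #({a, W - a} : Finset A) ≤ 2 := card_le_two
      rw [card_univ]
      omega)
    simp only [mem_insert, mem_singleton, not_or] at hy
    refine ⟨{y}, card_singleton y, ?_, ?_, ?_, ?_⟩ <;>
      simp only [sum_singleton, mem_singleton, add_eq_right]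
    · exact Ne.symm hy.1
    · exact Ne.symm hy.2.1
    · exact ha
    · exact fun h => hy.2.2 (eq_sub_of_add_eq' h)
  · obtain ⟨X, hX, hXB, hXs⟩ := exists_card_eq_disjoint_sum_eq hodd {0, a} (e - a) hk2 (by omega)
    simp only [disjoint_insert_right, disjoint_singleton_right] at hXB
    refine ⟨X, hX, isAdmissibleLabelSet_of_sum hXB.1 hXB.2 ?_ ?_⟩ <;>
      rw [hXs, add_sub_cancel]
    exacts [he, heW]
  · obtain ⟨Z, hZ, hZB, hZs⟩ := exists_card_eq_disjoint_sum_eq hodd {0, a} (-e)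
      (m := Fintype.card A - 2 - k) (by omega) (by omega)
    simp only [disjoint_insert_right, disjoint_singleton_right] at hZB
    have h0 : (0 : A) ∉ insert a Z := by simp [Ne.symm ha, hZB.1]
    set X := (insert 0 (insert a Z))ᶜ
    have hXs : a + ∑ x ∈ X, x = e := by
      have := sum_compl_add_sum (insert 0 (insert a Z)) (fun x => x)
      rw [sum_univ_eq_zero_of_odd_card hodd, sum_insert h0, sum_insert hZB.2, hZs] at this
      rw [eq_neg_of_add_eq_zero_left this]
      abel
    refine ⟨X, ?_, isAdmissibleLabelSet_of_sum (by simp [X]) (by simp [X]) (hXs ▸ he) (hXs ▸ heW)⟩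
    rw [card_compl, card_insert_of_notMem h0, card_insert_of_notMem hZB.2]
    omega

theorem exists_isGoodChildLabeling (hodd : Odd (Fintype.card A)) {a : A}
    (ha : a ≠ 0) (W : A) (C : Finset V) (hC : #C + 4 ≤ Fintype.card A) :
    ∃ φ : V → A, IsGoodChildLabeling C a W φ := by
  rcases C.eq_empty_or_nonempty with rfl | hne
  · exact ⟨0, by simp [IsGoodChildLabeling]⟩
  obtain ⟨X, hX, h0, haX, hsX, hWX⟩ := exists_isAdmissibleLabelSet hodd ha W hne.card_pos hC
  obtain ⟨φ, hφ⟩ := C.finite_toSet.exists_bijOn_of_encard_eq (t := (X : Set A)) (by simp [hX])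
  have hsum : ∑ c ∈ C, φ c = ∑ x ∈ X, x :=
    sum_nbij φ (fun c hc => hφ.mapsTo hc) hφ.injOn hφ.surjOn (fun _ _ => rfl)
  refine ⟨φ, hφ.injOn, fun c hc => ?_, fun _ => hsum ▸ hWX⟩
  have hcX : φ c ∈ X := hφ.mapsTo hc
  rw [hsum]
  exact ⟨ne_of_mem_of_not_mem hcX h0, ne_of_mem_of_not_mem hcX haX, ne_of_mem_of_not_mem hcX hsX⟩

end LabelSets

namespace SimpleGraph

variable {V : Type} {T : SimpleGraph V}

theorem IsTree.dist_eq_length_of_isPath (hT : T.IsTree) {u v : V} {p : T.Walk u v}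
    (hp : p.IsPath) : T.dist u v = p.length := by
  obtain ⟨q, hq, hlen⟩ := (hT.connected u v).exists_path_of_dist
  have : (⟨p, hp⟩ : T.Path u v) = ⟨q, hq⟩ := (hT.isAcyclic.subsingleton_path u v).elim _ _
  rw [← hlen, Subtype.mk.inj this]

theorem IsTree.exists_adj_dist_lt (hT : T.IsTree) (r : V) {v : V} (hv : v ≠ r) :
    ∃ p, T.Adj v p ∧ T.dist r p < T.dist r v := by
  obtain ⟨q, hq⟩ := (hT.connected v r).exists_walk_length_eq_dist
  cases q with
  | nil => exact absurd rfl hv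
  | cons h q =>
    refine ⟨_, h, ?_⟩
    rw [dist_comm, dist_comm (u := r), ← hq, Walk.length_cons]
    exact Nat.lt_succ_of_le (dist_le q)

theorem IsTree.eq_of_adj_of_dist_lt (hT : T.IsTree) {r v w w' : V} (hw : T.Adj v w)
    (hw' : T.Adj v w') (h : T.dist r w < T.dist r v) (h' : T.dist r w' < T.dist r v) :
    w = w' := by
  obtain ⟨p, hp, hlen⟩ := (hT.connected r v).exists_path_of_dist
  suffices key : ∀ w, T.Adj v w → T.dist r w < T.dist r v → w = p.penultimate from
    (key w hw h).trans (key w' hw' h').symm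
  intro w hw h
  refine hT.isAcyclic.eq_penultimate_of_adj_end hp hw (by_contra fun hwp => ?_)
  have := hT.dist_eq_length_of_isPath (hp.concat hwp hw)
  rw [Walk.length_concat] at this
  omega

variable [Fintype V] [DecidableRel T.Adj]

/-- Otherwise `T` would be the single edge `r c`. -/
theorem IsTree.two_le_degree_of_adj_of_degree_eq_one (hT : T.IsTree) {r c m : V}
    (hr : T.degree r = 1) (hrc : T.Adj r c) (hm : 2 ≤ T.degree m) : 2 ≤ T.degree c := by
  classical
  by_cases hmc : m = c
  · exact hmc ▸ hm
  obtain ⟨p, hp⟩ := hT.connected.preconnected.exists_isPath r m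
  cases p with
  | nil => omega
  | cons h q =>
    obtain rfl : _ = c := (card_le_one (s := T.neighborFinset r)).mp
      (by rw [card_neighborFinset_eq_degree, hr]) _ (by simpa using h) c (by simpa using hrc)
    have hq : ¬q.Nil := Walk.not_nil_of_ne (Ne.symm hmc)
    have hsnd : q.snd ≠ r := fun h' => (Walk.cons_isPath_iff _ _ |>.mp hp).2
      (h' ▸ q.getVert_mem_support 1)
    rw [← card_neighborFinset_eq_degree]
    exact one_lt_card.mpr ⟨r, by simpa using h.symm, q.snd, by simpa using q.adj_snd hq,
      hsnd.symm⟩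

variable (T) in
noncomputable def parent (r v : V) : V :=
  if h : ∃ p, T.Adj v p ∧ T.dist r p < T.dist r v then h.choose else v

variable (T) in
noncomputable def children (r u : V) : Finset V :=
  {v ∈ T.neighborFinset u | T.dist r u < T.dist r v}

theorem IsTree.parent_spec (hT : T.IsTree) {r v : V} (hv : v ≠ r) :
    T.Adj v (T.parent r v) ∧ T.dist r (T.parent r v) < T.dist r v := by
  have h := hT.exists_adj_dist_lt r hv
  rw [parent, dif_pos h]
  exact h.choose_spec

theorem IsTree.eq_parent (hT : T.IsTree) {r v w : V} (hw : T.Adj v w)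
    (h : T.dist r w < T.dist r v) : w = T.parent r v := by
  have hv : v ≠ r := by rintro rfl; simp at h
  exact hT.eq_of_adj_of_dist_lt hw (hT.parent_spec hv).1 h (hT.parent_spec hv).2

theorem IsTree.mem_children (hT : T.IsTree) {r u v : V} :
    v ∈ T.children r u ↔ v ≠ r ∧ T.parent r v = u := by
  simp only [children, mem_filter, mem_neighborFinset]
  constructor
  · rintro ⟨hadj, hlt⟩
    have hv : v ≠ r := by rintro rfl; simp at hlt
    exact ⟨hv, (hT.eq_parent hadj.symm hlt).symm⟩
  · rintro ⟨hv, rfl⟩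
    exact ⟨(hT.parent_spec hv).1.symm, (hT.parent_spec hv).2⟩

theorem IsTree.mem_children_or_mem_children_of_adj (hT : T.IsTree) (r : V) {u v : V}
    (h : T.Adj u v) : v ∈ T.children r u ∨ u ∈ T.children r v := by
  simp only [children, mem_filter, mem_neighborFinset]
  rcases hT.dist_eq_dist_add_one_of_adj r h with h' | h' <;> grind [Adj.symm]

theorem IsTree.sum_neighborFinset [DecidableEq V] (hT : T.IsTree) (r v : V) {M : Type}
    [AddCommMonoid M] (g : V → M) :
    ∑ y ∈ T.neighborFinset v, g y =
      (if v = r then 0 else g (T.parent r v)) + ∑ c ∈ T.children r v, g c := by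
  rw [← sum_filter_not_add_sum_filter _ (fun y => T.dist r v < T.dist r y)]
  congr 1
  split_ifs with hv
  · subst hv
    refine sum_eq_zero fun y hy => absurd ?_ (mem_filter.mp hy).2
    simpa using hT.connected.pos_dist_of_ne ((mem_neighborFinset _ _ _).mp (mem_filter.mp hy).1).ne
  · convert sum_singleton g (T.parent r v)
    ext y
    simp only [mem_filter, mem_neighborFinset, mem_singleton]
    constructor
    · rintro ⟨hadj, hle⟩
      have := hT.dist_eq_dist_add_one_of_adj r hadj
      exact hT.eq_parent hadj (by omega)
    · rintro rfl
      exact ⟨(hT.parent_spec hv).1, (hT.parent_spec hv).2.not_gt⟩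

theorem IsTree.card_children_add_one [DecidableEq V] (hT : T.IsTree) {r v : V} (hv : v ≠ r) :
    #(T.children r v) + 1 = T.degree v := by
  rw [← card_neighborFinset_eq_degree, card_eq_sum_ones (T.neighborFinset v),
    hT.sum_neighborFinset r v, if_neg hv, ← card_eq_sum_ones, add_comm]

section TwinLabeling

variable [DecidableEq V] (T) (r : V) {A : Type} [AddCommGroup A] (g₀ : A)

noncomputable def twinChildLabels (p : V) (s : A × A) : V → A :=
  if p = r then fun _ => g₀ else Classical.epsilon (IsGoodChildLabeling (T.children r p) s.1 s.2)

/-- The pair (label of the edge from `v` to its parent, weight of that parent), from which alone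
the labels of the edges from `v` to its children are chosen. At the root it is `(0, 0)`, so that
the weight of `r` is the sum of its child labels. -/
noncomputable def twinLabelState (v : V) : A × A :=
  if T.dist r (T.parent r v) < T.dist r v then
    let p := T.parent r v
    let φ := T.twinChildLabels r g₀ p (twinLabelState p)
    (φ v, (twinLabelState p).1 + ∑ c ∈ T.children r p, φ c)
  else (0, 0)
termination_by T.dist r v

noncomputable def twinLabel (v : V) : A := (T.twinLabelState r g₀ v).1

noncomputable def twinWeight (v : V) : A :=
  T.twinLabel r g₀ v + ∑ c ∈ T.children r v, T.twinChildLabels r g₀ v (T.twinLabelState r g₀ v) c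

noncomputable def twinEdgeLabeling : Sym2 V → A :=
  Sym2.lift ⟨fun u v => if T.dist r u < T.dist r v then T.twinLabel r g₀ v
    else if T.dist r v < T.dist r u then T.twinLabel r g₀ u else 0,
    fun u v => by dsimp only; split_ifs <;> first | rfl | omega⟩

theorem twinLabel_root : T.twinLabel r g₀ r = 0 := by
  rw [twinLabel, twinLabelState]
  simp

variable {T r g₀}

theorem twinEdgeLabeling_of_mem_children {p c : V} (hc : c ∈ T.children r p) :
    T.twinEdgeLabeling r g₀ s(p, c) = T.twinLabel r g₀ c := by
  simp [twinEdgeLabeling, (mem_filter.mp hc).2]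

theorem IsTree.twinLabelState_of_ne (hT : T.IsTree) {v : V} (hv : v ≠ r) :
    T.twinLabelState r g₀ v =
      (T.twinChildLabels r g₀ (T.parent r v) (T.twinLabelState r g₀ (T.parent r v)) v,
        T.twinWeight r g₀ (T.parent r v)) := by
  rw [twinLabelState, if_pos (hT.parent_spec hv).2]
  rfl

theorem IsTree.twinChildLabels_eq_twinLabel (hT : T.IsTree) {p c : V} (hc : c ∈ T.children r p) :
    T.twinChildLabels r g₀ p (T.twinLabelState r g₀ p) c = T.twinLabel r g₀ c := by
  obtain ⟨hcr, rfl⟩ := hT.mem_children.mp hc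
  rw [twinLabel, hT.twinLabelState_of_ne hcr]

theorem IsTree.twinWeight_eq (hT : T.IsTree) (v : V) :
    T.twinWeight r g₀ v = T.twinLabel r g₀ v + ∑ c ∈ T.children r v, T.twinLabel r g₀ c :=
  congrArg _ (sum_congr rfl fun _ hc => hT.twinChildLabels_eq_twinLabel hc)

theorem IsTree.sum_twinEdgeLabeling (hT : T.IsTree) (u : V) :
    ∑ y ∈ T.neighborFinset u, T.twinEdgeLabeling r g₀ s(y, u) = T.twinWeight r g₀ u := by
  rw [hT.sum_neighborFinset r u, hT.twinWeight_eq]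
  congr 1
  · split_ifs with hu
    · rw [hu, twinLabel_root]
    · rw [twinEdgeLabeling_of_mem_children (hT.mem_children.mpr ⟨hu, rfl⟩)]
  · exact sum_congr rfl fun c hc => by rw [Sym2.eq_swap, twinEdgeLabeling_of_mem_children hc]

theorem IsTree.twinEdgeLabeling_of_adj (hT : T.IsTree) {u y : V} (h : T.Adj u y) :
    y ∈ T.children r u ∧
        T.twinEdgeLabeling r g₀ s(u, y) = T.twinChildLabels r g₀ u (T.twinLabelState r g₀ u) y ∨
      y = T.parent r u ∧ T.twinEdgeLabeling r g₀ s(u, y) = T.twinLabel r g₀ u := by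
  rcases hT.mem_children_or_mem_children_of_adj r h with hy | hu
  · exact .inl ⟨hy, by rw [twinEdgeLabeling_of_mem_children hy, hT.twinChildLabels_eq_twinLabel hy]⟩
  · exact .inr ⟨(hT.mem_children.mp hu).2.symm,
      by rw [Sym2.eq_swap, twinEdgeLabeling_of_mem_children hu]⟩

variable [Fintype A]

theorem IsTree.isGoodChildLabeling_of_twinLabel_ne_zero (hT : T.IsTree)
    (hodd : Odd (Fintype.card A)) (hdeg : ∀ v, T.degree v + 3 ≤ Fintype.card A) {v : V}
    (hv : v ≠ r) (h : T.twinLabel r g₀ v ≠ 0) :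
    IsGoodChildLabeling (T.children r v) (T.twinLabel r g₀ v) (T.twinWeight r g₀ (T.parent r v))
      (T.twinChildLabels r g₀ v (T.twinLabelState r g₀ v)) := by
  have hC : #(T.children r v) + 4 ≤ Fintype.card A := by
    have := hT.card_children_add_one hv
    have := hdeg v
    omega
  have hs : T.twinLabelState r g₀ v = (T.twinLabel r g₀ v, T.twinWeight r g₀ (T.parent r v)) :=
    Prod.ext rfl (by rw [hT.twinLabelState_of_ne hv])
  rw [twinChildLabels, if_neg hv, hs]
  exact Classical.epsilon_spec (exists_isGoodChildLabeling hodd h _ _ hC)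

theorem IsTree.twinLabel_ne_zero (hT : T.IsTree) (hodd : Odd (Fintype.card A)) (hg₀ : g₀ ≠ 0)
    (hdeg : ∀ v, T.degree v + 3 ≤ Fintype.card A) {v : V} (hv : v ≠ r) :
    T.twinLabel r g₀ v ≠ 0 := by
  rw [twinLabel, hT.twinLabelState_of_ne hv]
  by_cases hp : T.parent r v = r
  · simpa [twinChildLabels, hp] using hg₀
  · have := hT.twinLabel_ne_zero hodd hg₀ hdeg hp
    exact ((hT.isGoodChildLabeling_of_twinLabel_ne_zero hodd hdeg hp this).2.1 v
      (hT.mem_children.mpr ⟨hv, rfl⟩)).1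
termination_by T.dist r v
decreasing_by exact (hT.parent_spec hv).2

theorem IsTree.isGoodChildLabeling (hT : T.IsTree) (hodd : Odd (Fintype.card A)) (hg₀ : g₀ ≠ 0)
    (hdeg : ∀ v, T.degree v + 3 ≤ Fintype.card A) {v : V} (hv : v ≠ r) :
    IsGoodChildLabeling (T.children r v) (T.twinLabel r g₀ v) (T.twinWeight r g₀ (T.parent r v))
      (T.twinChildLabels r g₀ v (T.twinLabelState r g₀ v)) :=
  hT.isGoodChildLabeling_of_twinLabel_ne_zero hodd hdeg hv (hT.twinLabel_ne_zero hodd hg₀ hdeg hv)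

theorem IsTree.twinWeight_ne_of_mem_children (hT : T.IsTree) (hodd : Odd (Fintype.card A))
    (hg₀ : g₀ ≠ 0) (hdeg : ∀ v, T.degree v + 3 ≤ Fintype.card A)
    (hroot : ∀ c ∈ T.children r r, (T.children r c).Nonempty) {p c : V}
    (hc : c ∈ T.children r p) : T.twinWeight r g₀ c ≠ T.twinWeight r g₀ p := by
  obtain ⟨hcr, hpc⟩ := hT.mem_children.mp hc
  rcases (T.children r c).eq_empty_or_nonempty with hleaf | hne
  · have hpr : p ≠ r := by
      rintro rfl
      exact (hroot c hc).ne_empty hleaf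
    rw [hT.twinWeight_eq c, hleaf, sum_empty, add_zero, ← hT.twinChildLabels_eq_twinLabel hc]
    exact ((hT.isGoodChildLabeling hodd hg₀ hdeg hpr).2.1 c hc).2.2
  · have h := (hT.isGoodChildLabeling hodd hg₀ hdeg hcr).2.2 hne
    rwa [hpc] at h

theorem IsTree.isTwinEdgeColoring_twinEdgeLabeling (hT : T.IsTree) (hodd : Odd (Fintype.card A))
    (hg₀ : g₀ ≠ 0) (hdeg : ∀ v, T.degree v + 3 ≤ Fintype.card A) (hr : T.degree r = 1)
    (hroot : ∀ c ∈ T.children r r, (T.children r c).Nonempty) :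
    IsTwinEdgeColoring T (T.twinEdgeLabeling r g₀) := by
  refine ⟨fun u v w hv hw hvw => ?_, fun u v huv => ?_⟩
  · by_cases hu : u = r
    · subst hu
      refine absurd ((card_le_one (s := T.neighborFinset u)).mp ?_ v ?_ w ?_) hvw <;>
        simp_all [card_neighborFinset_eq_degree]
    have hgood := hT.isGoodChildLabeling hodd hg₀ hdeg hu
    rcases hT.twinEdgeLabeling_of_adj (r := r) (g₀ := g₀) hv with ⟨hvc, hfv⟩ | ⟨hvp, hfv⟩ <;>
      rcases hT.twinEdgeLabeling_of_adj (r := r) (g₀ := g₀) hw with ⟨hwc, hfw⟩ | ⟨hwp, hfw⟩ <;>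
      rw [hfv, hfw]
    · exact fun h => hvw (hgood.1 hvc hwc h)
    · exact (hgood.2.1 v hvc).2.1
    · exact (hgood.2.1 w hwc).2.1.symm
    · exact absurd (hvp.trans hwp.symm) hvw
  · rw [hT.sum_twinEdgeLabeling, hT.sum_twinEdgeLabeling]
    rcases hT.mem_children_or_mem_children_of_adj r huv with h | h
    · exact (hT.twinWeight_ne_of_mem_children hodd hg₀ hdeg hroot h).symm
    · exact hT.twinWeight_ne_of_mem_children hodd hg₀ hdeg hroot h

theorem IsTree.twinEdgeLabeling_ne_zero (hT : T.IsTree) (hodd : Odd (Fintype.card A))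
    (hg₀ : g₀ ≠ 0) (hdeg : ∀ v, T.degree v + 3 ≤ Fintype.card A) {e : Sym2 V}
    (he : e ∈ T.edgeSet) : T.twinEdgeLabeling r g₀ e ≠ 0 := by
  induction e using Sym2.ind with | _ u v => ?_
  rcases hT.mem_children_or_mem_children_of_adj r he with h | h
  · rw [twinEdgeLabeling_of_mem_children h]
    exact hT.twinLabel_ne_zero hodd hg₀ hdeg (hT.mem_children.mp h).1
  · rw [Sym2.eq_swap, twinEdgeLabeling_of_mem_children h]
    exact hT.twinLabel_ne_zero hodd hg₀ hdeg (hT.mem_children.mp h).1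

end TwinLabeling

end SimpleGraph

theorem tree_nowhere_zero_twin_coloring_of_even_general {V : Type} [Fintype V] (T : SimpleGraph V)
    [DecidableRel T.Adj] (hT : T.IsTree)
    (hΔ : 6 ≤ T.maxDegree)
    (A : Type) [AddCommGroup A] [Fintype A] (hodd : Odd (Fintype.card A))
    (hcard : T.maxDegree + 3 ≤ Fintype.card A) :
    ∃ f : Sym2 V → A, IsTwinEdgeColoring T f ∧ ∀ e ∈ T.edgeSet, f e ≠ 0 := by
  classical
  have : Nonempty V := hT.connected.nonempty
  obtain ⟨m, hm⟩ := T.exists_maximal_degree_vertex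
  have : Nontrivial V := by
    obtain ⟨u, hu⟩ := (T.degree_pos_iff_exists_adj m).mp (by omega)
    exact ⟨m, u, hu.ne⟩
  obtain ⟨r, hr⟩ := hT.exists_vert_degree_one_of_nontrivial
  have : Nontrivial A := Fintype.one_lt_card_iff_nontrivial.mp (by omega)
  obtain ⟨g₀, hg₀⟩ := exists_ne (0 : A)
  have hdeg (v : V) : T.degree v + 3 ≤ Fintype.card A := by
    have := T.degree_le_maxDegree v
    omega
  have hroot (c : V) (hc : c ∈ T.children r r) : (T.children r c).Nonempty := by
    have hrc : T.Adj r c := (mem_neighborFinset _ _ _).mp (mem_filter.mp hc).1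
    have := hT.two_le_degree_of_adj_of_degree_eq_one hr hrc (m := m) (by omega)
    have := hT.card_children_add_one (r := r) hrc.ne'
    exact card_pos.mp (by omega)
  exact ⟨T.twinEdgeLabeling r g₀, hT.isTwinEdgeColoring_twinEdgeLabeling hodd hg₀ hdeg hr hroot,
    fun e he => hT.twinEdgeLabeling_ne_zero hodd hg₀ hdeg he⟩

/-- If `T` is a tree with even maximum degree `Δ(T) ≥ 6`, then for every Abelian group
`𝒢` of odd order `|𝒢| ≥ Δ(T) + 3` there exists a nowhere-zero `𝒢`-twin edge coloring
of `T`. -/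
theorem tree_nowhere_zero_twin_coloring_of_even {V : Type} [Fintype V] (T : SimpleGraph V)
    [DecidableRel T.Adj] (hT : T.IsTree) (heven : Even T.maxDegree)
    (hΔ : 6 ≤ T.maxDegree)
    (A : Type) [AddCommGroup A] [Fintype A] (hodd : Odd (Fintype.card A))
    (hcard : T.maxDegree + 3 ≤ Fintype.card A) :
    ∃ f : Sym2 V → A, IsTwinEdgeColoring T f ∧ ∀ e ∈ T.edgeSet, f e ≠ 0 :=
  tree_nowhere_zero_twin_coloring_of_even_general T hT hΔ A hodd hcard
end

section
/- For every odd integer k ≥ 3, every path of order at least 3 has a ℤ_k-twin edge coloring. -/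
open Finset SimpleGraph

lemma nbr_left {n : ℕ} [DecidableRel (SimpleGraph.pathGraph n).Adj] (hn : 2 ≤ n)
    (u : Fin n) (hu : (u : ℕ) = 0) :
    (SimpleGraph.pathGraph n).neighborFinset u = {⟨1, by omega⟩} := by
  ext x
  simp only [SimpleGraph.mem_neighborFinset, pathGraph_adj, Finset.mem_singleton, Fin.ext_iff]
  omega

lemma nbr_right {n : ℕ} [DecidableRel (SimpleGraph.pathGraph n).Adj] (hn : 2 ≤ n)
    (u : Fin n) (hu : (u : ℕ) = n - 1) :
    (SimpleGraph.pathGraph n).neighborFinset u = {⟨n - 2, by omega⟩} := by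
  ext x
  have := x.isLt
  simp only [SimpleGraph.mem_neighborFinset, pathGraph_adj, Finset.mem_singleton, Fin.ext_iff]
  omega

lemma nbr_mid {n : ℕ} [DecidableRel (SimpleGraph.pathGraph n).Adj]
    (u : Fin n) (h1 : 0 < (u : ℕ)) (h2 : (u : ℕ) < n - 1) :
    (SimpleGraph.pathGraph n).neighborFinset u =
      {⟨(u : ℕ) - 1, by omega⟩, ⟨(u : ℕ) + 1, by omega⟩} := by
  ext x
  simp only [SimpleGraph.mem_neighborFinset, pathGraph_adj, Finset.mem_insert,
    Finset.mem_singleton, Fin.ext_iff]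
  omega

/-- For every odd integer `k ≥ 3`, every path of order at least `3` has a `ℤ_k`-twin
edge coloring. -/
theorem path_twin_coloring (k : ℕ) (hk : 3 ≤ k) (hkodd : Odd k) (n : ℕ) (hn : 3 ≤ n) :
    ∃ f : Sym2 (Fin n) → ZMod k,
      @IsTwinEdgeColoring _ _ (SimpleGraph.pathGraph n) (Classical.decRel _) _ _ f := by
  have hnd2 : ¬ (k ∣ 2) := by
    intro h
    have := Nat.le_of_dvd (by norm_num) h
    omega
  have hnd4 : ¬ (k ∣ 4) := by
    intro h
    have hle := Nat.le_of_dvd (by norm_num) h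
    rw [Nat.odd_iff] at hkodd
    interval_cases k <;> omega
  have htwo : (2 : ZMod k) ≠ 0 := by
    intro h
    exact hnd2 ((ZMod.natCast_eq_zero_iff 2 k).mp (by exact_mod_cast h))
  have hfour : (4 : ZMod k) ≠ 0 := by
    intro h
    exact hnd4 ((ZMod.natCast_eq_zero_iff 4 k).mp (by exact_mod_cast h))
  haveI : NeZero k := ⟨by omega⟩
  letI : DecidableRel (SimpleGraph.pathGraph n).Adj := Classical.decRel _
  -- choose the shift constant `c`
  obtain ⟨c, hc⟩ : ∃ c : ZMod k,
      c ∉ ({-3, -((2 * n - 5 : ℕ) : ZMod k)} : Finset (ZMod k)) := by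
    by_contra hcon
    push_neg at hcon
    have hsub : (Finset.univ : Finset (ZMod k)) ⊆
        ({-3, -((2 * n - 5 : ℕ) : ZMod k)} : Finset (ZMod k)) := fun x _ => hcon x
    have h1 := Finset.card_le_card hsub
    have h2 : ({-3, -((2 * n - 5 : ℕ) : ZMod k)} : Finset (ZMod k)).card ≤ 2 := by
      apply le_trans (Finset.card_insert_le _ _)
      simp
    rw [Finset.card_univ, ZMod.card] at h1
    omega
  simp only [Finset.mem_insert, Finset.mem_singleton] at hc
  push_neg at hc
  obtain ⟨hc1, hc2⟩ := hc
  have hc3 : c + 3 ≠ 0 := fun h => hc1 (by linear_combination h)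
  have hcm : c + ((2 * n - 5 : ℕ) : ZMod k) ≠ 0 := fun h => hc2 (by linear_combination h)
  refine ⟨Sym2.lift ⟨fun i j => ((i : ℕ) : ZMod k) + ((j : ℕ) : ZMod k) + c,
    fun i j => by ring⟩, ?_, ?_⟩
  · -- properness
    intro u v w huv huw hvw heq
    simp only [Sym2.lift_mk] at heq
    have hvw' : ((v : ℕ) : ZMod k) = ((w : ℕ) : ZMod k) := by linear_combination heq
    rw [pathGraph_adj] at huv huw
    have hne : (v : ℕ) ≠ (w : ℕ) := fun h => hvw (Fin.ext h)
    have key : ∀ a b : ℕ, a + 2 = b → ((a : ℕ) : ZMod k) = ((b : ℕ) : ZMod k) → False := by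
      intro a b hab h
      subst hab
      apply htwo
      push_cast at h
      linear_combination -h
    rcases huv with h1 | h1 <;> rcases huw with h2 | h2
    · exact hne (by omega)
    · exact key _ _ (by omega) hvw'.symm
    · exact key _ _ (by omega) hvw'
    · exact hne (by omega)
  · -- weight condition
    suffices H : ∀ u v : Fin n, (u : ℕ) + 1 = (v : ℕ) →
        (∑ x ∈ (SimpleGraph.pathGraph n).neighborFinset u,
          Sym2.lift ⟨fun i j : Fin n => ((i : ℕ) : ZMod k) + ((j : ℕ) : ZMod k) + c,
            fun i j => by ring⟩ s(x, u)) ≠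
        (∑ x ∈ (SimpleGraph.pathGraph n).neighborFinset v,
          Sym2.lift ⟨fun i j : Fin n => ((i : ℕ) : ZMod k) + ((j : ℕ) : ZMod k) + c,
            fun i j => by ring⟩ s(x, v)) by
      intro u v hadj
      rw [pathGraph_adj] at hadj
      rcases hadj with h | h
      · exact H u v h
      · exact (H v u h).symm
    intro u v huv
    have hun := u.isLt
    have hvn := v.isLt
    by_cases hu0 : (u : ℕ) = 0
    · -- u = 0, v = 1 interior
      rw [nbr_left (by omega) u hu0, nbr_mid v (by omega) (by omega)]
      rw [Finset.sum_singleton,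
        Finset.sum_pair (by simp only [ne_eq, Fin.mk.injEq]; omega)]
      simp only [Sym2.lift_mk]
      have hv1 : (v : ℕ) = 1 := by omega
      simp only [hu0, hv1]
      norm_num
      intro h
      exact hc3 (by linear_combination h)
    · by_cases hv1 : (v : ℕ) = n - 1
      · -- u interior, v = n - 1
        obtain ⟨m, rfl⟩ : ∃ m, n = m + 3 := ⟨n - 3, by omega⟩
        rw [nbr_right (by omega) v hv1, nbr_mid u (by omega) (by omega)]
        rw [Finset.sum_singleton,
          Finset.sum_pair (by simp only [ne_eq, Fin.mk.injEq]; omega)]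
        simp only [Sym2.lift_mk]
        have hu' : (u : ℕ) = m + 1 := by omega
        have hv' : (v : ℕ) = m + 2 := by omega
        simp only [hu', hv']
        norm_num
        intro h
        apply hcm
        have hm : (2 * (m + 3) - 5 : ℕ) = 2 * m + 1 := by omega
        rw [hm]
        push_cast at h ⊢
        linear_combination h
      · -- both interior
        rw [nbr_mid u (by omega) (by omega), nbr_mid v (by omega) (by omega)]
        rw [Finset.sum_pair (by simp only [ne_eq, Fin.mk.injEq]; omega),
          Finset.sum_pair (by simp only [ne_eq, Fin.mk.injEq]; omega)]
        simp only [Sym2.lift_mk]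
        obtain ⟨a, ha⟩ : ∃ a, (u : ℕ) = a + 1 := ⟨(u : ℕ) - 1, by omega⟩
        have hv' : (v : ℕ) = a + 2 := by omega
        simp only [ha, hv']
        norm_num
        intro h
        apply hfour
        linear_combination -h
end

section
/- Let 𝒢 be a finite Abelian group of order at least 10 having at most one involution. For any elements a, b ∈ 𝒢 with 2b = 0 and a ≠ b, there exist nonzero elements x, y ∈ 𝒢 with x ≠ y, {a,b} ∩ {x,y} = ∅, and x + y = b − a. -/
/-- Let `𝒢` be a finite Abelian group of order at least `10` having at most one
involution.  For any `a b ∈ 𝒢` with `2b = 0` and `a ≠ b` there exist nonzero elements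
`x ≠ y` with `{a, b} ∩ {x, y} = ∅` and `x + y = b - a`. -/
theorem exists_nonzero_pair_sum_eq {G : Type} [AddCommGroup G] [Fintype G]
    (hcard : 10 ≤ Fintype.card G)
    (hinv : ∀ i j : G, i ≠ 0 → i + i = 0 → j ≠ 0 → j + j = 0 → i = j)
    (a b : G) (hb : b + b = 0) (hab : a ≠ b) :
    ∃ x y : G, x ≠ 0 ∧ y ≠ 0 ∧ x ≠ y ∧ ({a, b} ∩ {x, y} : Set G) = ∅ ∧ x + y = b - a := by
  classical
  set c : G := b - a with hc
  have hcne : c ≠ 0 := sub_ne_zero.mpr (Ne.symm hab)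
  set T : Finset G := Finset.univ.filter (fun x : G => x + x = c) with hTdef
  have hT : T.card ≤ 2 := by
    by_contra h
    push_neg at h
    obtain ⟨t1, t2, t3, ht1, ht2, ht3, h12, h13, h23⟩ := Finset.two_lt_card_iff.mp h
    simp only [hTdef, Finset.mem_filter, Finset.mem_univ, true_and] at ht1 ht2 ht3
    have e12 : (t1 - t2) + (t1 - t2) = 0 := by
      calc (t1 - t2) + (t1 - t2) = (t1 + t1) - (t2 + t2) := by abel
      _ = 0 := by rw [ht1, ht2, sub_self]
    have e13 : (t1 - t3) + (t1 - t3) = 0 := by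
      calc (t1 - t3) + (t1 - t3) = (t1 + t1) - (t3 + t3) := by abel
      _ = 0 := by rw [ht1, ht3, sub_self]
    have := hinv (t1 - t2) (t1 - t3) (sub_ne_zero.mpr h12) e12 (sub_ne_zero.mpr h13) e13
    exact h23 (sub_right_inj.mp this)
  set B : Finset G := {0, c, a, b, c - a, c - b} with hBdef
  have hB : B.card ≤ 6 := by
    simp only [hBdef]
    apply le_trans (Finset.card_insert_le _ _)
    apply Nat.succ_le_succ
    apply le_trans (Finset.card_insert_le _ _)
    apply Nat.succ_le_succ
    apply le_trans (Finset.card_insert_le _ _)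
    apply Nat.succ_le_succ
    apply le_trans (Finset.card_insert_le _ _)
    apply Nat.succ_le_succ
    apply le_trans (Finset.card_insert_le _ _)
    apply Nat.succ_le_succ
    exact Finset.card_singleton _ |>.le
  have hBT : (B ∪ T).card < Fintype.card G := by
    calc (B ∪ T).card ≤ B.card + T.card := Finset.card_union_le _ _
    _ ≤ 8 := by omega
    _ < Fintype.card G := by omega
  obtain ⟨x, hx⟩ : ∃ x : G, x ∉ B ∪ T := by
    by_contra h
    push_neg at h
    have : (Finset.univ : Finset G) ⊆ B ∪ T := fun y _ => h y
    have := Finset.card_le_card this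
    simp only [Finset.card_univ] at this
    omega
  have hxB : x ∉ B := fun h => hx (Finset.mem_union_left _ h)
  have hxT : x ∉ T := fun h => hx (Finset.mem_union_right _ h)
  simp only [hBdef, Finset.mem_insert, Finset.mem_singleton, not_or] at hxB
  obtain ⟨hx0, hxc, hxa, hxb, hxca, hxcb⟩ := hxB
  simp only [hTdef, Finset.mem_filter, Finset.mem_univ, true_and] at hxT
  refine ⟨x, c - x, hx0, sub_ne_zero.mpr (Ne.symm hxc), ?_, ?_, by abel⟩
  · intro h
    exact hxT (eq_sub_iff_add_eq.mp h)
  · rw [Set.eq_empty_iff_forall_notMem]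
    rintro z ⟨hz1, hz2⟩
    simp only [Set.mem_insert_iff, Set.mem_singleton_iff] at hz1 hz2
    rcases hz1 with rfl | rfl <;> rcases hz2 with h | h
    · exact hxa h.symm
    · exact hxca (by rw [h, sub_sub_cancel])
    · exact hxb h.symm
    · exact hxcb (by rw [h, sub_sub_cancel])
end
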